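/- arXiv:1702.04099 — 6 statements merged into one kernel-verified Lean document; each statement's English description precedes it below -/
import Mathlib

section
/- For every integer m ≥ 0 and every real x ≠ 0, (1/2)·∫_0^1 σ^{2m}·log( (1 + x²)/(σ² + x²) ) dσ = f_{2m+1}(x), and for x = 0 the left-hand side equals 1/(2m+1)². -/
open MeasureTheory

/-- The function `f_{2m+1}`. -/
noncomputable def f2m1 (m : ℕ) (x : ℝ) : ℝ :=
  if x = 0 then 1 / (2 * (m : ℝ) + 1) ^ 2
  else (1 / (2 * (m : ℝ) + 1)) *
    ((-1) ^ (m + 1) * x ^ (2 * m + 1) * Real.arctan (1 / x)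
      + ∑ k ∈ Finset.range (m + 1), ((-1) ^ (m - k) / (2 * (k : ℝ) + 1)) * x ^ (2 * m - 2 * k))

/-- Telescoping/geometric identity. -/
lemma aux_key (m : ℕ) (a b : ℝ) :
    (∑ j ∈ Finset.range (m + 1), (-1 : ℝ) ^ (m - j) * b ^ (m - j) * a ^ j) * (a + b)
      = a ^ (m + 1) + (-1 : ℝ) ^ m * b ^ (m + 1) := by
  have h := geom_sum₂_mul a (-b) (m + 1)
  rw [sub_neg_eq_add] at h
  have hs : (∑ j ∈ Finset.range (m + 1), (-1 : ℝ) ^ (m - j) * b ^ (m - j) * a ^ j)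
      = ∑ i ∈ Finset.range (m + 1), a ^ i * (-b) ^ (m + 1 - 1 - i) := by
    refine Finset.sum_congr rfl fun i hi => ?_
    rw [Nat.add_sub_cancel, neg_pow]
    ring
  rw [hs, h, neg_pow]
  ring

/-- Integrability of `σ ^ n * log σ` on `[0, 1]`. -/
lemma aux_int_log (n : ℕ) :
    IntervalIntegrable (fun σ : ℝ => σ ^ n * Real.log σ) volume 0 1 := by
  have hrp : IntervalIntegrable (fun σ : ℝ => 2 * σ ^ (-(1 / 2 : ℝ))) volume 0 1 :=
    (intervalIntegral.intervalIntegrable_rpow' (by norm_num)).const_mul 2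
  apply hrp.mono_fun
  · exact ((continuous_pow n).aestronglyMeasurable.mul
      Real.measurable_log.aestronglyMeasurable)
  · filter_upwards [ae_restrict_mem measurableSet_uIoc] with σ hσ
    rw [Set.uIoc_of_le (by norm_num : (0:ℝ) ≤ 1)] at hσ
    obtain ⟨h0, h1⟩ := hσ
    have hnn : (0:ℝ) < σ ^ (-(1/2 : ℝ)) := Real.rpow_pos_of_pos h0 _
    have hlog : |Real.log σ| = -Real.log σ := abs_of_nonpos (Real.log_nonpos h0.le h1)
    have hle : -Real.log σ ≤ 2 * σ ^ (-(1/2 : ℝ)) := by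
      have h2 := Real.log_le_sub_one_of_pos hnn
      rw [Real.log_rpow h0] at h2
      nlinarith
    have hpow : σ ^ n ≤ 1 := pow_le_one₀ h0.le h1
    have hpow' : (0:ℝ) ≤ σ ^ n := by positivity
    simp only [norm_mul, Real.norm_eq_abs]
    rw [hlog, abs_of_nonneg hpow', abs_of_nonneg hnn.le,
      abs_of_nonneg (by norm_num : (0:ℝ) ≤ (2:ℝ))]
    have hln : 0 ≤ -Real.log σ := neg_nonneg.2 (Real.log_nonpos h0.le h1)
    calc σ ^ n * -Real.log σ ≤ 1 * -Real.log σ := by nlinarith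
      _ ≤ 2 * σ ^ (-(1/2 : ℝ)) := by simpa using hle

theorem stmt_9 (m : ℕ) (x : ℝ) :
    (1 / 2) * ∫ σ in (0 : ℝ)..1, σ ^ (2 * m) * Real.log ((1 + x ^ 2) / (σ ^ 2 + x ^ 2)) =
      f2m1 m x := by
  have hm1 : (2 * (m:ℝ) + 1) ≠ 0 := by positivity
  rcases eq_or_ne x 0 with rfl | hx
  · -- case x = 0
    rw [f2m1, if_pos rfl]
    have hEq : Set.EqOn (fun σ : ℝ => σ ^ (2*m) * Real.log ((1 + (0:ℝ) ^ 2) / (σ ^ 2 + (0:ℝ) ^ 2)))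
        (fun σ : ℝ => -2 * (σ ^ (2*m) * Real.log σ)) (Set.uIcc (0:ℝ) 1) := by
      intro σ _
      rcases eq_or_ne σ 0 with rfl | hσ
      · simp
      · simp only []
        rw [show (1 + (0:ℝ)^2) / (σ^2 + (0:ℝ)^2) = 1 / σ^2 by ring_nf,
          Real.log_div one_ne_zero (pow_ne_zero 2 hσ), Real.log_one, Real.log_pow]
        push_cast
        ring
    rw [intervalIntegral.integral_congr hEq]
    set F : ℝ → ℝ := fun σ => -2 * (σ ^ (2*m) * (σ * Real.log σ) / (2*(m:ℝ)+1)
      - σ ^ (2*m+1) / (2*(m:ℝ)+1)^2) with hF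
    have hcont : ContinuousOn F (Set.Icc (0:ℝ) 1) := by
      apply Continuous.continuousOn
      apply Continuous.mul continuous_const
      exact (((continuous_pow (2*m)).mul Real.continuous_mul_log).div_const _).sub
        ((continuous_pow (2*m+1)).div_const _)
    have hderiv : ∀ σ ∈ Set.Ioo (0:ℝ) 1, HasDerivAt F (-2 * (σ ^ (2*m) * Real.log σ)) σ := by
      intro σ hσ
      have hσ0 : σ ≠ 0 := ne_of_gt hσ.1
      have hF2 : F = fun σ : ℝ => -2 * (σ ^ (2*m+1) * Real.log σ / (2*(m:ℝ)+1)
          - σ ^ (2*m+1) / (2*(m:ℝ)+1)^2) := by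
        funext σ; rw [hF]; ring
      rw [hF2]
      have h1 : HasDerivAt (fun σ : ℝ => σ ^ (2*m+1) * Real.log σ)
          ((↑(2*m+1) : ℝ) * σ ^ (2*m) * Real.log σ + σ ^ (2*m+1) * σ⁻¹) σ := by
        have := (hasDerivAt_pow (2*m+1) σ).fun_mul (Real.hasDerivAt_log hσ0)
        simpa [Nat.add_sub_cancel, mul_assoc] using this
      have h2 := ((h1.div_const (2*(m:ℝ)+1)).sub
        ((hasDerivAt_pow (2*m+1) σ).div_const ((2*(m:ℝ)+1)^2))).const_mul (-2 : ℝ)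
      refine h2.congr_deriv ?_
      have hps : σ ^ (2*m+1) * σ⁻¹ = σ ^ (2*m) := by
        rw [pow_succ]
        field_simp
      rw [hps]
      push_cast [Nat.add_sub_cancel]
      field_simp
      ring
    have hint : IntervalIntegrable (fun σ : ℝ => -2 * (σ ^ (2*m) * Real.log σ)) volume 0 1 :=
      (aux_int_log (2*m)).const_mul (-2)
    rw [intervalIntegral.integral_eq_sub_of_hasDerivAt_of_le (by norm_num) hcont hderiv hint]
    simp only [hF, Real.log_one, Real.log_zero, one_pow, mul_zero, zero_mul, mul_one,
      zero_pow (Nat.succ_ne_zero (2*m)), zero_div, sub_zero, mul_zero]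
    field_simp
    ring
  · -- case x ≠ 0
    rw [f2m1, if_neg hx]
    have hx2 : ∀ σ : ℝ, (0:ℝ) < σ ^ 2 + x ^ 2 := fun σ => by positivity
    have h1x : (0:ℝ) < 1 + x ^ 2 := by positivity
    have hEq : Set.EqOn (fun σ : ℝ => σ ^ (2*m) * Real.log ((1 + x ^ 2) / (σ ^ 2 + x ^ 2)))
        (fun σ : ℝ => σ ^ (2*m) * (Real.log (1 + x^2) - Real.log (σ^2 + x^2)))
        (Set.uIcc (0:ℝ) 1) := by
      intro σ _
      simp only []
      rw [Real.log_div h1x.ne' (hx2 σ).ne']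
    rw [intervalIntegral.integral_congr hEq]
    set H : ℝ → ℝ := fun σ => σ ^ (2*m+1) * (Real.log (1 + x^2) - Real.log (σ^2 + x^2))
      + 2 * (∑ j ∈ Finset.range (m+1), ((-1:ℝ)^(m-j) * x^(2*(m-j)) / (2*(j:ℝ)+1)) * σ^(2*j+1))
      + 2 * (-1:ℝ)^(m+1) * x^(2*m+1) * Real.arctan (σ / x) with hHdef
    have hH : ∀ σ : ℝ, HasDerivAt H
        ((2*(m:ℝ)+1) * (σ ^ (2*m) * (Real.log (1 + x^2) - Real.log (σ^2 + x^2)))) σ := by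
      intro σ
      have hd : (σ^2 + x^2) ≠ 0 := (hx2 σ).ne'
      have hlog : HasDerivAt (fun σ : ℝ => Real.log (σ^2 + x^2)) (2*σ / (σ^2 + x^2)) σ := by
        have h0 : HasDerivAt (fun σ : ℝ => σ^2 + x^2) (2*σ) σ := by
          simpa using (hasDerivAt_pow 2 σ).add_const (x^2)
        exact h0.log hd
      have h1 : HasDerivAt (fun σ : ℝ => σ ^ (2*m+1) * (Real.log (1 + x^2) - Real.log (σ^2 + x^2)))
          ((↑(2*m+1) : ℝ) * σ ^ (2*m) * (Real.log (1 + x^2) - Real.log (σ^2 + x^2))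
            + σ ^ (2*m+1) * (0 - 2*σ / (σ^2 + x^2))) σ := by
        have := (hasDerivAt_pow (2*m+1) σ).fun_mul ((hasDerivAt_const σ (Real.log (1+x^2))).sub hlog)
        simpa [Nat.add_sub_cancel, mul_assoc] using this
      have h2 : HasDerivAt (fun σ : ℝ =>
            ∑ j ∈ Finset.range (m+1), ((-1:ℝ)^(m-j) * x^(2*(m-j)) / (2*(j:ℝ)+1)) * σ^(2*j+1))
          (∑ j ∈ Finset.range (m+1), (-1:ℝ)^(m-j) * x^(2*(m-j)) * σ^(2*j)) σ := by
        refine HasDerivAt.fun_sum fun j _ => ?_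
        have hj : (2*(j:ℝ)+1) ≠ 0 := by positivity
        have hp := (hasDerivAt_pow (2*j+1) σ).const_mul
          ((-1:ℝ)^(m-j) * x^(2*(m-j)) / (2*(j:ℝ)+1))
        refine hp.congr_deriv ?_
        push_cast [Nat.add_sub_cancel]
        field_simp
      have h3 : HasDerivAt (fun σ : ℝ => Real.arctan (σ / x)) (x / (σ^2 + x^2)) σ := by
        have h := ((hasDerivAt_id σ).div_const x).arctan
        refine h.congr_deriv ?_
        rw [id]
        rw [div_pow]
        field_simp
        ring
      have hsum := (h1.add (h2.const_mul 2)).add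
        (h3.const_mul (2 * (-1:ℝ)^(m+1) * x^(2*m+1)))
      have hkey : (∑ j ∈ Finset.range (m+1), (-1:ℝ)^(m-j) * x^(2*(m-j)) * σ^(2*j)) * (σ^2 + x^2)
          = σ^(2*(m+1)) + (-1:ℝ)^m * x^(2*(m+1)) := by
        have := aux_key m (σ^2) (x^2)
        simpa [← pow_mul] using this
      refine hsum.congr_deriv ?_
      push_cast
      field_simp
      linear_combination (2 : ℝ) * hkey
    have hG : ∀ σ ∈ Set.uIcc (0:ℝ) 1, HasDerivAt (fun σ => H σ / (2*(m:ℝ)+1))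
        (σ ^ (2*m) * (Real.log (1 + x^2) - Real.log (σ^2 + x^2))) σ := by
      intro σ _
      have h := (hH σ).div_const (2*(m:ℝ)+1)
      refine h.congr_deriv ?_
      field_simp
    have hint : IntervalIntegrable
        (fun σ : ℝ => σ ^ (2*m) * (Real.log (1 + x^2) - Real.log (σ^2 + x^2))) volume 0 1 := by
      apply Continuous.intervalIntegrable
      have hlogc : Continuous fun σ : ℝ => Real.log (σ^2 + x^2) :=
        Continuous.log (by continuity) fun σ => (hx2 σ).ne'
      exact (continuous_pow _).mul (continuous_const.sub hlogc)
    rw [intervalIntegral.integral_eq_sub_of_hasDerivAt hG hint]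
    have hH1 : H 1 = 2 * (∑ j ∈ Finset.range (m+1),
          ((-1:ℝ)^(m-j) * x^(2*(m-j)) / (2*(j:ℝ)+1)))
        + 2 * (-1:ℝ)^(m+1) * x^(2*m+1) * Real.arctan (1 / x) := by
      rw [hHdef]
      simp [one_div]
    have hH0 : H 0 = 0 := by
      rw [hHdef]
      simp [zero_pow, Finset.sum_eq_zero, Real.arctan_zero]
    rw [hH1, hH0]
    have hsumeq : (∑ j ∈ Finset.range (m+1), ((-1:ℝ)^(m-j) * x^(2*(m-j)) / (2*(j:ℝ)+1)))
        = ∑ k ∈ Finset.range (m+1), ((-1:ℝ)^(m-k) / (2*(k:ℝ)+1)) * x^(2*m-2*k) := by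
      refine Finset.sum_congr rfl fun k hk => ?_
      have hkm : k ≤ m := Nat.lt_succ_iff.mp (Finset.mem_range.mp hk)
      have : 2*(m-k) = 2*m - 2*k := by omega
      rw [this]
      ring
    rw [hsumeq]
    field_simp
    ring
end

section
/- For every integer m ≥ 0, the function f_{2m+1} is integrable on ℝ and ∫_{-∞}^{∞} f_{2m+1}(x) dx = π/((2m+1)(2m+2)). -/
open MeasureTheory

open Real Finset
lemma keyC (m : ℕ) (x u : ℝ) :
    (x^2 + u^2) * ∑ k ∈ range (m+1), (-1:ℝ)^(m-k) * x^(2*m-2*k) * u^(2*k)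
      = u^(2*m+2) + (-1)^m * x^(2*m+2) := by
  have h := geom_sum₂_mul (u^2) (-(x^2)) (m+1)
  simp only [Nat.add_sub_cancel] at h
  have e : ∑ i ∈ range (m+1), (u^2)^i * (-(x^2))^(m - i)
      = ∑ k ∈ range (m+1), (-1:ℝ)^(m-k) * x^(2*m-2*k) * u^(2*k) := by
    refine Finset.sum_congr rfl fun k hk => ?_
    have hk' : k ≤ m := by simpa [Nat.lt_succ_iff] using hk
    have h2 : 2*m - 2*k = 2*(m-k) := by omega
    rw [h2, neg_pow, ← pow_mul, ← pow_mul, pow_mul x 2 (m-k)]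
    ring
  rw [← e]
  linear_combination h

lemma keyB {x : ℝ} (hx : x ≠ 0) :
    ∫ u in (0:ℝ)..1, (x^2+u^2)⁻¹ = (1/x) * Real.arctan (1/x) := by
  have h : ∀ u ∈ Set.uIcc (0:ℝ) 1,
      HasDerivAt (fun u => (1/x) * Real.arctan (u/x)) ((x^2+u^2)⁻¹) u := by
    intro u _
    have h1 : HasDerivAt (fun u : ℝ => u / x) (1/x) u := (hasDerivAt_id u).div_const x
    have h2 := (Real.hasDerivAt_arctan (u/x)).comp u h1
    have h3 := h2.const_mul (1/x)
    refine HasDerivAt.congr_deriv h3 ?_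
    have hx2 : (0:ℝ) < x^2 + u^2 := by positivity
    field_simp
  have hc : IntervalIntegrable (fun u => (x^2+u^2)⁻¹) volume 0 1 := by
    apply Continuous.intervalIntegrable
    exact (continuous_const.add (continuous_pow 2)).inv₀ fun u => ne_of_gt (by positivity : (0:ℝ) < x^2+u^2)
  rw [intervalIntegral.integral_eq_sub_of_hasDerivAt h hc]
  simp

lemma keyA {u : ℝ} (hu : 0 < u) :
    ∫ x : ℝ, (x^2+u^2)⁻¹ = Real.pi / u := by
  have h := MeasureTheory.Measure.integral_comp_div (fun y : ℝ => (1+y^2)⁻¹) u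
  rw [integral_univ_inv_one_add_sq] at h
  have e : ∀ x : ℝ, (x^2+u^2)⁻¹ = (u^2)⁻¹ * (1+(x/u)^2)⁻¹ := by
    intro x
    have : (0:ℝ) < x^2+u^2 := by positivity
    field_simp
    ring
  simp_rw [e]
  rw [integral_const_mul, h, abs_of_pos hu, smul_eq_mul]
  field_simp


lemma keyD (m : ℕ) (x : ℝ) :
    f2m1 m x = (1/(2*(m:ℝ)+1)) * ∫ u in (0:ℝ)..1, u^(2*m+2) / (x^2+u^2) := by
  rcases eq_or_ne x 0 with rfl | hx
  · have e : ∫ u in (0:ℝ)..1, u^(2*m+2) / ((0:ℝ)^2+u^2) = ∫ u in (0:ℝ)..1, u^(2*m) := by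
      apply intervalIntegral.integral_congr_ae
      filter_upwards with u hu
      rw [Set.uIoc_of_le (by norm_num : (0:ℝ) ≤ 1)] at hu
      have hu0 : u ≠ 0 := ne_of_gt hu.1
      field_simp
      ring
    rw [e, integral_pow]
    simp only [f2m1, if_pos rfl]
    push_cast
    rw [one_pow, zero_pow (by omega)]
    field_simp
    ring
  · have hpt : ∀ u : ℝ, u^(2*m+2) / (x^2+u^2)
        = (∑ k ∈ range (m+1), (-1:ℝ)^(m-k) * x^(2*m-2*k) * u^(2*k))
          + (-1)^(m+1) * x^(2*m+2) * (x^2+u^2)⁻¹ := by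
      intro u
      have h0 : x^2+u^2 ≠ 0 := by positivity
      rw [div_eq_iff h0, add_mul, mul_assoc, inv_mul_cancel₀ h0, mul_one]
      linear_combination - keyC m x u
    simp_rw [hpt]
    have hS : IntervalIntegrable
        (fun u : ℝ => ∑ k ∈ range (m+1), (-1:ℝ)^(m-k) * x^(2*m-2*k) * u^(2*k)) volume 0 1 := by
      apply Continuous.intervalIntegrable
      exact continuous_finset_sum _ fun k _ => continuous_const.mul (continuous_pow _)
    have hB : IntervalIntegrable
        (fun u : ℝ => (-1:ℝ)^(m+1) * x^(2*m+2) * (x^2+u^2)⁻¹) volume 0 1 := by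
      apply Continuous.intervalIntegrable
      exact continuous_const.mul ((continuous_const.add (continuous_pow 2)).inv₀ fun u => ne_of_gt (by positivity : (0:ℝ) < x^2+u^2))
    rw [intervalIntegral.integral_add hS hB,
      intervalIntegral.integral_finset_sum (fun k _ => by
        apply Continuous.intervalIntegrable
        exact continuous_const.mul (continuous_pow _))]
    simp_rw [intervalIntegral.integral_const_mul, integral_pow, keyB hx]
    simp only [f2m1, if_neg hx]
    congr 1
    rw [add_comm]
    congr 1
    · refine Finset.sum_congr rfl fun k hk => ?_
      push_cast
      rw [zero_pow (by omega)]
      ring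
    · have : x^(2*m+2) = x^(2*m+1) * x := by ring
      rw [this]
      field_simp

lemma keyD' (m : ℕ) (x : ℝ) :
    f2m1 m x = (1/(2*(m:ℝ)+1)) * ∫ u in Set.Ioc (0:ℝ) 1, u^(2*m+2) / (x^2+u^2) := by
  rw [keyD, intervalIntegral.integral_of_le zero_le_one]

lemma pow_even_nonneg (m : ℕ) (u : ℝ) : 0 ≤ u^(2*m+2) := by
  rw [show 2*m+2 = 2*(m+1) by ring, pow_mul]
  positivity

lemma integrand_meas (m : ℕ) (x : ℝ) :
    AEStronglyMeasurable (fun u : ℝ => u^(2*m+2) / (x^2+u^2))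
      (volume.restrict (Set.Ioc (0:ℝ) 1)) :=
  (((measurable_id.pow_const (2*m+2)).div
    (measurable_const.add (measurable_id.pow_const 2))).aestronglyMeasurable).restrict

lemma integrand_le_one (m : ℕ) (x : ℝ) {u : ℝ} (hu : u ∈ Set.Ioc (0:ℝ) 1) :
    u^(2*m+2) / (x^2+u^2) ≤ 1 := by
  have h1 : u^(2*m+2) ≤ u^2 := pow_le_pow_of_le_one hu.1.le hu.2 (by omega)
  have h2 : (0:ℝ) < x^2 + u^2 := by have := hu.1; positivity
  rw [div_le_one h2]
  nlinarith [sq_nonneg x]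

lemma hInt (m : ℕ) (x : ℝ) :
    IntegrableOn (fun u : ℝ => u^(2*m+2) / (x^2+u^2)) (Set.Ioc (0:ℝ) 1) := by
  apply Measure.integrableOn_of_bounded (M := 1) (by simp)
  · exact ((measurable_id.pow_const (2*m+2)).div
      (measurable_const.add (measurable_id.pow_const 2))).aestronglyMeasurable
  · refine ae_restrict_of_forall_mem measurableSet_Ioc fun u hu => ?_
    rw [Real.norm_of_nonneg (div_nonneg (pow_even_nonneg m u) (by positivity))]
    exact integrand_le_one m x hu

lemma f_nonneg (m : ℕ) (x : ℝ) : 0 ≤ f2m1 m x := by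
  rw [keyD']
  apply mul_nonneg (by positivity)
  apply setIntegral_nonneg measurableSet_Ioc
  intro u _
  exact div_nonneg (pow_even_nonneg m u) (by positivity)

lemma f_le (m : ℕ) (x : ℝ) : f2m1 m x ≤ (2/(2*(m:ℝ)+1)) * (1+x^2)⁻¹ := by
  rw [keyD']
  have hb : ∫ u in Set.Ioc (0:ℝ) 1, u^(2*m+2) / (x^2+u^2)
      ≤ ∫ _u in Set.Ioc (0:ℝ) 1, 2 * (1+x^2)⁻¹ := by
    apply setIntegral_mono_on (hInt m x) (integrableOn_const (hs := measure_Ioc_lt_top.ne))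
      measurableSet_Ioc
    intro u hu
    have h2 : (0:ℝ) < x^2 + u^2 := by have := hu.1; positivity
    have h3 : (0:ℝ) < 1 + x^2 := by positivity
    have h1 : u^(2*m+2) ≤ u^2 := pow_le_pow_of_le_one hu.1.le hu.2 (by omega)
    have hu2 : u^2 ≤ 1 := by nlinarith [hu.1.le, hu.2]
    rw [show (2:ℝ)*(1+x^2)⁻¹ = 2/(1+x^2) from (div_eq_mul_inv 2 _).symm, div_le_div_iff₀ h2 h3]
    nlinarith [mul_le_mul_of_nonneg_right h1 h3.le,
      mul_le_mul_of_nonneg_right hu2 (sq_nonneg x), sq_nonneg u, sq_nonneg x]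
  have := mul_le_mul_of_nonneg_left hb (by positivity : (0:ℝ) ≤ 1/(2*(m:ℝ)+1))
  refine this.trans_eq ?_
  rw [setIntegral_const]
  simp [Real.volume_Ioc]
  ring

lemma f_meas (m : ℕ) : AEStronglyMeasurable (f2m1 m) volume := by
  apply Measurable.aestronglyMeasurable
  unfold f2m1
  apply Measurable.ite (measurableSet_singleton 0) measurable_const
  apply Measurable.const_mul
  apply Measurable.add
  · exact (measurable_const.mul (measurable_id.pow_const _)).mul
      (Real.measurable_arctan.comp (measurable_const.div measurable_id))
  · exact Finset.measurable_sum _ fun k _ => measurable_const.mul (measurable_id.pow_const _)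

lemma f_integrable (m : ℕ) : Integrable (f2m1 m) := by
  apply Integrable.mono' (integrable_inv_one_add_sq.const_mul (2/(2*(m:ℝ)+1))) (f_meas m)
  filter_upwards with x
  rw [Real.norm_of_nonneg (f_nonneg m x)]
  exact f_le m x

lemma prod_integrable (m : ℕ) :
    Integrable (Function.uncurry fun (x u : ℝ) => u^(2*m+2) / (x^2+u^2))
      (volume.prod (volume.restrict (Set.Ioc (0:ℝ) 1))) := by
  have hmeas : AEStronglyMeasurable
      (Function.uncurry fun (x u : ℝ) => u^(2*m+2) / (x^2+u^2))
      (volume.prod (volume.restrict (Set.Ioc (0:ℝ) 1))) :=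
    (((measurable_snd.pow_const (2*m+2)).div
      ((measurable_fst.pow_const 2).add (measurable_snd.pow_const 2))).aestronglyMeasurable)
  rw [integrable_prod_iff hmeas]
  constructor
  · filter_upwards with x
    exact hInt m x
  · have e : (fun x : ℝ => ∫ u in Set.Ioc (0:ℝ) 1, ‖u^(2*m+2) / (x^2+u^2)‖)
        = fun x => (2*(m:ℝ)+1) * f2m1 m x := by
      funext x
      have : ∀ u : ℝ, ‖u^(2*m+2) / (x^2+u^2)‖ = u^(2*m+2) / (x^2+u^2) := fun u =>
        Real.norm_of_nonneg (div_nonneg (pow_even_nonneg m u) (by positivity))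
      simp_rw [this]
      rw [keyD' m x]
      have h0 : (2*(m:ℝ)+1) ≠ 0 := by positivity
      field_simp
    simp only [Function.uncurry_apply_pair]
    rw [e]
    exact (f_integrable m).const_mul _

theorem stmt_10 (m : ℕ) :
    Integrable (f2m1 m) ∧
    ∫ x : ℝ, f2m1 m x = Real.pi / ((2 * (m : ℝ) + 1) * (2 * (m : ℝ) + 2)) := by
  refine ⟨f_integrable m, ?_⟩
  have h0 : (2*(m:ℝ)+1) ≠ 0 := by positivity
  have swap := integral_integral_swap (prod_integrable m)
  -- LHS of swap
  have lhs : ∫ x : ℝ, ∫ u in Set.Ioc (0:ℝ) 1, u^(2*m+2) / (x^2+u^2)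
      = (2*(m:ℝ)+1) * ∫ x : ℝ, f2m1 m x := by
    rw [← integral_const_mul]
    congr 1
    funext x
    rw [keyD' m x]
    field_simp
  -- RHS of swap
  have rhs : ∫ u in Set.Ioc (0:ℝ) 1, ∫ x : ℝ, u^(2*m+2) / (x^2+u^2)
      = Real.pi / (2*(m:ℝ)+2) := by
    have e : ∀ u ∈ Set.Ioc (0:ℝ) 1,
        (∫ x : ℝ, u^(2*m+2) / (x^2+u^2)) = Real.pi * u^(2*m+1) := by
      intro u hu
      have hu0 : 0 < u := hu.1
      simp_rw [div_eq_mul_inv]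
      rw [integral_const_mul, keyA hu0]
      rw [show 2*m+2 = (2*m+1)+1 by ring, pow_succ]
      field_simp
    rw [setIntegral_congr_fun measurableSet_Ioc e, integral_const_mul,
      ← intervalIntegral.integral_of_le zero_le_one, integral_pow]
    rw [one_pow, zero_pow (by omega : 2*m+1+1 ≠ 0), sub_zero]
    push_cast
    ring
  rw [lhs, rhs] at swap
  field_simp at swap ⊢
  linarith [swap]
end

section
/- For every integer m ≥ 0 and every real x with |x| > 1, f_{2m+1}(x) = (1/(2m+1))·Σ_{k=1}^{∞} (-1)^{k-1}/( (2k + 2m + 1)·x^{2k} ), the series converging absolutely. -/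
lemma aux_head (x : ℝ) (hx : x ≠ 0) (m n : ℕ) (h : n ≤ m) :
    (-1 : ℝ) ^ (m + 1) * x ^ (2 * m + 1) *
      ((-1) ^ n * (1 / x) ^ (2 * n + 1) / ((2 * n + 1 : ℕ) : ℝ)) =
    -(((-1 : ℝ) ^ (m - n) / (2 * (n : ℝ) + 1)) * x ^ (2 * m - 2 * n)) := by
  obtain ⟨j, rfl⟩ := Nat.exists_eq_add_of_le h
  have hsgn : ((-1 : ℝ)) ^ (n + j + 1) * (-1) ^ n = -(-1) ^ j := by
    rw [← pow_add, show n + j + 1 + n = 2 * n + (j + 1) by ring, pow_add, pow_mul]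
    simp [pow_succ]
  have hpw : x ^ (2 * (n + j) + 1) * (x ^ (2 * n + 1))⁻¹ = x ^ (2 * j) := by
    rw [show 2 * (n + j) + 1 = 2 * j + (2 * n + 1) by ring, pow_add, mul_assoc,
      mul_inv_cancel₀ (pow_ne_zero _ hx), mul_one]
  have e1 : n + j - n = j := by omega
  have e2 : 2 * (n + j) - 2 * n = 2 * j := by omega
  have hden : ((2 * n + 1 : ℕ) : ℝ) = 2 * (n : ℝ) + 1 := by push_cast; ring
  rw [e1, e2, hden]
  have : (-1 : ℝ) ^ (n + j + 1) * x ^ (2 * (n + j) + 1) *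
      ((-1) ^ n * (1 / x) ^ (2 * n + 1) / (2 * (n : ℝ) + 1)) =
      (((-1 : ℝ)) ^ (n + j + 1) * (-1) ^ n) *
        (x ^ (2 * (n + j) + 1) * (x ^ (2 * n + 1))⁻¹) * (2 * (n : ℝ) + 1)⁻¹ := by
    rw [one_div, inv_pow]; ring
  rw [this, hsgn, hpw]; ring

lemma aux_tail (x : ℝ) (hx : x ≠ 0) (m k : ℕ) :
    (-1 : ℝ) ^ (m + 1) * x ^ (2 * m + 1) *
      ((-1) ^ (k + (m + 1)) * (1 / x) ^ (2 * (k + (m + 1)) + 1) /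
        ((2 * (k + (m + 1)) + 1 : ℕ) : ℝ)) =
    (-1 : ℝ) ^ k / ((2 * ((k : ℝ) + 1) + 2 * m + 1) * x ^ (2 * (k + 1))) := by
  have hsgn : ((-1 : ℝ)) ^ (m + 1) * (-1) ^ (k + (m + 1)) = (-1) ^ k := by
    rw [← pow_add, show m + 1 + (k + (m + 1)) = k + 2 * (m + 1) by ring, pow_add, pow_mul]
    simp
  have hpw : x ^ (2 * m + 1) * (x ^ (2 * (k + (m + 1)) + 1))⁻¹ = (x ^ (2 * (k + 1)))⁻¹ := by
    have hsplit : x ^ (2 * (k + (m + 1)) + 1) = x ^ (2 * (k + 1)) * x ^ (2 * m + 1) := by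
      rw [← pow_add]; congr 1; ring
    rw [hsplit, mul_inv, mul_comm (x ^ (2 * m + 1)), mul_assoc,
      inv_mul_cancel₀ (pow_ne_zero _ hx), mul_one]
  have hden : ((2 * (k + (m + 1)) + 1 : ℕ) : ℝ) = 2 * ((k : ℝ) + 1) + 2 * m + 1 := by
    push_cast; ring
  have hd0 : (2 * ((k : ℝ) + 1) + 2 * m + 1) ≠ 0 := by positivity
  have : (-1 : ℝ) ^ (m + 1) * x ^ (2 * m + 1) *
      ((-1) ^ (k + (m + 1)) * (1 / x) ^ (2 * (k + (m + 1)) + 1) /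
        (2 * ((k : ℝ) + 1) + 2 * m + 1)) =
      (((-1 : ℝ)) ^ (m + 1) * (-1) ^ (k + (m + 1))) *
        (x ^ (2 * m + 1) * (x ^ (2 * (k + (m + 1)) + 1))⁻¹) *
          (2 * ((k : ℝ) + 1) + 2 * m + 1)⁻¹ := by
    rw [one_div, inv_pow]; ring
  rw [hden, this, hsgn, hpw, div_eq_mul_inv, mul_inv]
  ring

set_option maxHeartbeats 1000000 in
theorem stmt_11 (m : ℕ) (x : ℝ) (hx : 1 < |x|) :
    Summable (fun k : ℕ =>
      |(-1 : ℝ) ^ ((k + 1) - 1) / ((2 * ((k : ℝ) + 1) + 2 * m + 1) * x ^ (2 * (k + 1)))|) ∧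
    f2m1 m x = (1 / (2 * (m : ℝ) + 1)) *
      ∑' k : ℕ, (-1 : ℝ) ^ ((k + 1) - 1) / ((2 * ((k : ℝ) + 1) + 2 * m + 1) * x ^ (2 * (k + 1))) := by
  have hx0 : x ≠ 0 := by intro h; rw [h] at hx; simp at hx; linarith
  have hx2 : (1 : ℝ) < x ^ 2 := by
    have := sq_abs x
    nlinarith
  simp only [Nat.add_sub_cancel]
  constructor
  · -- summability
    have hgeo : Summable fun k : ℕ => ((x ^ 2)⁻¹) ^ k :=
      summable_geometric_of_lt_one (by positivity) (by
        rw [inv_lt_one_iff₀]; right; exact hx2)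
    refine Summable.of_nonneg_of_le (fun k => abs_nonneg _) (fun k => ?_) hgeo
    have hdk : (0 : ℝ) < 2 * ((k : ℝ) + 1) + 2 * m + 1 := by positivity
    have hxk : (0 : ℝ) < (x ^ 2) ^ (k + 1) := by positivity
    rw [abs_div, abs_pow, abs_neg, abs_one, one_pow, abs_mul, abs_pow,
      abs_of_pos hdk]
    have hax : |x| ^ (2 * (k + 1)) = (x ^ 2) ^ (k + 1) := by
      rw [pow_mul, sq_abs]
    rw [hax, inv_pow, ← one_div]
    rw [div_le_div_iff₀ (by positivity) (by positivity)]
    have h1 : (x ^ 2) ^ k ≤ (x ^ 2) ^ (k + 1) :=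
      pow_le_pow_right₀ hx2.le (Nat.le_succ k)
    nlinarith [hxk, hdk, pow_pos (lt_trans one_pos hx2) k]
  · -- the identity
    have hy : ‖1 / x‖ < 1 := by
      rw [Real.norm_eq_abs, abs_div, abs_one, div_lt_one (by linarith)]
      linarith
    have H := (Real.hasSum_arctan hy).mul_left ((-1 : ℝ) ^ (m + 1) * x ^ (2 * m + 1))
    set f : ℕ → ℝ := fun n => (-1 : ℝ) ^ (m + 1) * x ^ (2 * m + 1) *
      ((-1) ^ n * (1 / x) ^ (2 * n + 1) / ((2 * n + 1 : ℕ) : ℝ)) with hf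
    have Hf : HasSum f ((-1 : ℝ) ^ (m + 1) * x ^ (2 * m + 1) * Real.arctan (1 / x)) := H
    have H3 : HasSum (fun k => f (k + (m + 1)))
        ((-1 : ℝ) ^ (m + 1) * x ^ (2 * m + 1) * Real.arctan (1 / x)
          - ∑ i ∈ Finset.range (m + 1), f i) := by
      apply (hasSum_nat_add_iff (m + 1)).2
      rwa [sub_add_cancel]
    have hsum : ∑ i ∈ Finset.range (m + 1), f i =
        -∑ k ∈ Finset.range (m + 1), ((-1 : ℝ) ^ (m - k) / (2 * (k : ℝ) + 1)) *
          x ^ (2 * m - 2 * k) := by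
      rw [← Finset.sum_neg_distrib]
      apply Finset.sum_congr rfl
      intro i hi
      exact aux_head x hx0 m i (by simpa [Nat.lt_succ_iff] using hi)
    have htail : (fun k => f (k + (m + 1))) = fun k : ℕ =>
        (-1 : ℝ) ^ k / ((2 * ((k : ℝ) + 1) + 2 * m + 1) * x ^ (2 * (k + 1))) :=
      funext fun k => aux_tail x hx0 m k
    rw [htail, hsum] at H3
    rw [H3.tsum_eq]
    rw [f2m1, if_neg hx0]
    ring
end

section
/- For every integer m ≥ 0 there exists a constant C = C(m) > 0 such that for all real x with |x| ≥ 1: |f_{2m+1}(x)| ≤ C/x² and |f_{2m+1}'(x)| ≤ C/|x|³; moreover, if m ≥ 1, |f_{2m}(x)| ≤ C/|x|³ for all |x| ≥ 1. -/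
/-- The function `f_{2m}`. -/
noncomputable def f2m (m : ℕ) (x : ℝ) : ℝ :=
  if x = 0 then 0
  else (-1) ^ m * x ^ (2 * m) * Real.arctan (1 / x)
    + ∑ k ∈ Finset.range m, ((-1) ^ (m - k + 1) / (2 * (k : ℝ) + 1)) * x ^ (2 * m - 2 * k - 1)
    - x / ((2 * (m : ℝ) + 1) * (1 + x ^ 2))

/-- Remainder of the arctan Taylor series after `M` terms. -/
noncomputable def Rm (M : ℕ) (t : ℝ) : ℝ :=
  Real.arctan t - ∑ k ∈ Finset.range M, (-1) ^ k * t ^ (2 * k + 1) / (2 * (k : ℝ) + 1)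

lemma hasDerivAt_Rm (M : ℕ) (t : ℝ) :
    HasDerivAt (Rm M) ((-t ^ 2) ^ M / (1 + t ^ 2)) t := by
  have hterm : ∀ k ∈ Finset.range M,
      HasDerivAt (fun t : ℝ => (-1) ^ k * t ^ (2 * k + 1) / (2 * (k : ℝ) + 1))
        ((-t ^ 2) ^ k) t := by
    intro k _
    have h := ((hasDerivAt_pow (2 * k + 1) t).const_mul ((-1 : ℝ) ^ k)).div_const
      (2 * (k : ℝ) + 1)
    refine h.congr_deriv (Eq.symm ?_)
    have hc : ((2 * k + 1 : ℕ) : ℝ) = 2 * (k : ℝ) + 1 := by push_cast; ring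
    rw [Nat.add_sub_cancel, neg_pow, pow_mul, hc, mul_div_assoc,
      mul_div_cancel_left₀ _ (by positivity : (2 * (k : ℝ) + 1) ≠ 0)]
  have hsum := HasDerivAt.sum hterm
  have h := (Real.hasDerivAt_arctan t).sub hsum
  have hne : (-t ^ 2 : ℝ) ≠ 1 := by nlinarith [sq_nonneg t]
  have hgeom : ∑ k ∈ Finset.range M, (-t ^ 2) ^ k = ((-t ^ 2) ^ M - 1) / (-t ^ 2 - 1) :=
    geom_sum_eq hne M
  have hden : (1 + t ^ 2 : ℝ) ≠ 0 := by positivity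
  have hkey : ∀ A : ℝ, 1 / (1 + t ^ 2) - (A - 1) / (-t ^ 2 - 1) = A / (1 + t ^ 2) := by
    intro A
    have hden2 : (-t ^ 2 - 1 : ℝ) ≠ 0 := by nlinarith [sq_nonneg t]
    field_simp
    ring
  have heq : 1 / (1 + t ^ 2) - ∑ k ∈ Finset.range M, (-t ^ 2) ^ k
      = (-t ^ 2) ^ M / (1 + t ^ 2) := by
    rw [hgeom]; exact hkey _
  rw [← heq]
  refine h.congr_of_eventuallyEq (Filter.Eventually.of_forall fun s => ?_)
  simp [Rm, Finset.sum_apply]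

lemma Rm_zero (M : ℕ) : Rm M 0 = 0 := by
  simp [Rm, Real.arctan_zero]

lemma abs_Rm_le (M : ℕ) (t : ℝ) : |Rm M t| ≤ |t| ^ (2 * M + 1) := by
  have hcont : Continuous fun s : ℝ => (-s ^ 2) ^ M / (1 + s ^ 2) := by
    apply Continuous.div (by continuity) (by continuity)
    intro s; positivity
  have key : ∫ s in (0:ℝ)..t, (-s ^ 2) ^ M / (1 + s ^ 2) = Rm M t - Rm M 0 :=
    intervalIntegral.integral_eq_sub_of_hasDerivAt (fun s _ => hasDerivAt_Rm M s)
      (hcont.intervalIntegrable 0 t)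
  have hb : ∀ s ∈ Set.uIoc (0:ℝ) t, ‖(-s ^ 2) ^ M / (1 + s ^ 2)‖ ≤ |t| ^ (2 * M) := by
    intro s hs
    have hst : |s| ≤ |t| := by
      rcases Set.mem_uIoc.1 hs with ⟨h1, h2⟩ | ⟨h1, h2⟩
      · rw [abs_of_pos h1, abs_of_pos (h1.trans_le h2)]; exact h2
      · have ht : t < 0 := h1.trans_le h2
        rw [abs_of_nonpos h2, abs_of_neg ht]; linarith
    have h1 : ‖(-s ^ 2) ^ M / (1 + s ^ 2)‖ ≤ |s| ^ (2 * M) := by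
      rw [Real.norm_eq_abs, abs_div, abs_pow, abs_neg, abs_pow, ← pow_mul]
      have h2 : (1:ℝ) ≤ |1 + s ^ 2| := by
        rw [abs_of_pos (by positivity)]; nlinarith [sq_nonneg s]
      exact div_le_self (by positivity) h2
    exact h1.trans (pow_le_pow_left₀ (abs_nonneg s) hst _)
  have h := intervalIntegral.norm_integral_le_of_norm_le_const hb
  rw [key, Rm_zero, sub_zero, sub_zero, Real.norm_eq_abs] at h
  calc |Rm M t| ≤ |t| ^ (2 * M) * |t| := h
    _ = |t| ^ (2 * M + 1) := (pow_succ _ _).symm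

lemma sgn_aux (m k : ℕ) (hk : k ≤ m) : ((-1 : ℝ)) ^ (m - k) = (-1) ^ m * (-1) ^ k := by
  have h2 : ((-1 : ℝ)) ^ k * (-1) ^ k = 1 := by
    rw [← pow_add, ← two_mul, pow_mul]; norm_num
  calc ((-1 : ℝ)) ^ (m - k) = (-1) ^ (m - k) * ((-1) ^ k * (-1) ^ k) := by rw [h2, mul_one]
    _ = ((-1) ^ (m - k) * (-1) ^ k) * (-1) ^ k := by ring
    _ = (-1) ^ m * (-1) ^ k := by rw [← pow_add, Nat.sub_add_cancel hk]

lemma f2m1_eq (m : ℕ) (x : ℝ) (hx : x ≠ 0) :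
    f2m1 m x = (-1) ^ (m + 1) / (2 * (m : ℝ) + 1) * (x ^ (2 * m + 1) * Rm (m + 1) x⁻¹) := by
  have hS : x ^ (2 * m + 1) *
      ∑ k ∈ Finset.range (m + 1), (-1) ^ k * x⁻¹ ^ (2 * k + 1) / (2 * (k : ℝ) + 1)
      = ∑ k ∈ Finset.range (m + 1), (-1) ^ k / (2 * (k : ℝ) + 1) * x ^ (2 * m - 2 * k) := by
    rw [Finset.mul_sum]
    refine Finset.sum_congr rfl fun k hk => ?_
    have hk' : k ≤ m := Nat.lt_succ_iff.1 (Finset.mem_range.1 hk)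
    have hxp : x ^ (2 * m + 1) = x ^ (2 * m - 2 * k) * x ^ (2 * k + 1) := by
      rw [← pow_add]; congr 1; omega
    rw [hxp, inv_pow]
    field_simp
  have hsgn : ∑ k ∈ Finset.range (m + 1), ((-1 : ℝ)) ^ (m - k) / (2 * (k : ℝ) + 1) * x ^ (2 * m - 2 * k)
      = (-1) ^ m * ∑ k ∈ Finset.range (m + 1), (-1) ^ k / (2 * (k : ℝ) + 1) * x ^ (2 * m - 2 * k) := by
    rw [Finset.mul_sum]
    refine Finset.sum_congr rfl fun k hk => ?_
    rw [sgn_aux m k (Nat.lt_succ_iff.1 (Finset.mem_range.1 hk))]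
    ring
  have hs1 : ((-1 : ℝ)) ^ (m + 1) = -(-1) ^ m := by rw [pow_succ]; ring
  rw [f2m1, if_neg hx, Rm, one_div, mul_sub, hS, hsgn, hs1]
  set S := ∑ k ∈ Finset.range (m + 1), ((-1:ℝ)) ^ k / (2 * (k : ℝ) + 1) * x ^ (2 * m - 2 * k) with hSdef
  ring

lemma f2m_eq (m : ℕ) (x : ℝ) (hx : x ≠ 0) :
    f2m m x = 1 / ((2 * (m : ℝ) + 1) * (x * (1 + x ^ 2)))
      + (-1) ^ m * (x ^ (2 * m) * Rm (m + 1) x⁻¹) := by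
  have hS : x ^ (2 * m) *
      ∑ k ∈ Finset.range m, (-1) ^ k * x⁻¹ ^ (2 * k + 1) / (2 * (k : ℝ) + 1)
      = ∑ k ∈ Finset.range m, (-1) ^ k / (2 * (k : ℝ) + 1) * x ^ (2 * m - 2 * k - 1) := by
    rw [Finset.mul_sum]
    refine Finset.sum_congr rfl fun k hk => ?_
    have hk' : k < m := Finset.mem_range.1 hk
    have hxp : x ^ (2 * m) = x ^ (2 * m - 2 * k - 1) * x ^ (2 * k + 1) := by
      rw [← pow_add]; congr 1; omega
    rw [hxp, inv_pow]
    field_simp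
  have hsgn : ∑ k ∈ Finset.range m, ((-1 : ℝ)) ^ (m - k + 1) / (2 * (k : ℝ) + 1) * x ^ (2 * m - 2 * k - 1)
      = -((-1) ^ m * ∑ k ∈ Finset.range m, (-1) ^ k / (2 * (k : ℝ) + 1) * x ^ (2 * m - 2 * k - 1)) := by
    rw [Finset.mul_sum, ← Finset.sum_neg_distrib]
    refine Finset.sum_congr rfl fun k hk => ?_
    rw [pow_succ, sgn_aux m k (Finset.mem_range.1 hk).le]
    ring
  have hsq : ((-1 : ℝ)) ^ m * (-1) ^ m = 1 := by
    rw [← pow_add, ← two_mul, pow_mul]; norm_num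
  have hcancel : x ^ (2 * m) * x⁻¹ ^ (2 * m + 1) = x⁻¹ := by
    rw [inv_pow, pow_succ, mul_inv, ← mul_assoc, mul_inv_cancel₀ (pow_ne_zero _ hx), one_mul]
  have hfrac : 1 / ((2 * (m : ℝ) + 1) * (x * (1 + x ^ 2))) - x⁻¹ / (2 * (m : ℝ) + 1)
      = -(x / ((2 * (m : ℝ) + 1) * (1 + x ^ 2))) := by
    have h1 : (2 * (m : ℝ) + 1) ≠ 0 := by positivity
    have h2 : (1 + x ^ 2 : ℝ) ≠ 0 := by positivity
    field_simp
    ring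
  rw [f2m, if_neg hx, one_div, hsgn, Rm, Finset.sum_range_succ]
  set S := ∑ k ∈ Finset.range m, ((-1:ℝ)) ^ k / (2 * (k : ℝ) + 1) * x ^ (2 * m - 2 * k - 1) with hSdef
  set T := ∑ k ∈ Finset.range m, ((-1:ℝ)) ^ k * x⁻¹ ^ (2 * k + 1) / (2 * (k : ℝ) + 1) with hTdef
  set A := Real.arctan x⁻¹ with hAdef
  linear_combination ((-1:ℝ)) ^ m * hS + (1 / (2 * (m : ℝ) + 1)) * hcancel
    + (x ^ (2*m) * x⁻¹ ^ (2*m+1) / (2 * (m : ℝ) + 1)) * hsq - hfrac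

lemma hasDerivAt_f2m1 (m : ℕ) (x : ℝ) (hx : x ≠ 0) :
    HasDerivAt (f2m1 m)
      ((-1) ^ (m + 1) / (2 * (m : ℝ) + 1) *
        ((2 * (m : ℝ) + 1) * x ^ (2 * m) * Rm (m + 1) x⁻¹
          + x ^ (2 * m + 1) * ((-x⁻¹ ^ 2) ^ (m + 1) / (1 + x⁻¹ ^ 2) * (-(x ^ 2)⁻¹)))) x := by
  have hinv : HasDerivAt (fun y : ℝ => y⁻¹) (-(x ^ 2)⁻¹) x := hasDerivAt_inv hx
  have hRcomp : HasDerivAt (fun y : ℝ => Rm (m + 1) y⁻¹)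
      ((-x⁻¹ ^ 2) ^ (m + 1) / (1 + x⁻¹ ^ 2) * (-(x ^ 2)⁻¹)) x :=
    (hasDerivAt_Rm (m + 1) x⁻¹).comp x hinv
  have h1 := (hasDerivAt_pow (2 * m + 1) x).mul hRcomp
  have heq : f2m1 m =ᶠ[nhds x]
      fun y => (-1) ^ (m + 1) / (2 * (m : ℝ) + 1) * (y ^ (2 * m + 1) * Rm (m + 1) y⁻¹) := by
    filter_upwards [eventually_ne_nhds hx] with y hy
    exact f2m1_eq m y hy
  have h2 := (h1.const_mul ((-1 : ℝ) ^ (m + 1) / (2 * (m : ℝ) + 1))).congr_of_eventuallyEq heq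
  refine h2.congr_deriv ?_
  push_cast
  ring

lemma abs_pow_cancel (x : ℝ) (hx : x ≠ 0) (a b : ℕ) :
    |x| ^ a * |x|⁻¹ ^ (a + b) = |x|⁻¹ ^ b := by
  rw [pow_add, ← mul_assoc, ← mul_pow, mul_inv_cancel₀ (abs_ne_zero.2 hx), one_pow, one_mul]

theorem stmt_12 (m : ℕ) :
    ∃ C > 0,
      (∀ x : ℝ, 1 ≤ |x| →
        |f2m1 m x| ≤ C / x ^ 2 ∧ |deriv (f2m1 m) x| ≤ C / |x| ^ 3) ∧
      (1 ≤ m → ∀ x : ℝ, 1 ≤ |x| → |f2m m x| ≤ C / |x| ^ 3) := by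
  have hc : (0:ℝ) < 2 * (m:ℝ) + 1 := by positivity
  have hc1 : (1:ℝ) ≤ 2 * (m:ℝ) + 1 := by
    have : (0:ℝ) ≤ (m:ℝ) := Nat.cast_nonneg m
    linarith
  have hcabs : |(-1:ℝ) ^ (m+1) / (2 * (m:ℝ) + 1)| = 1 / (2 * (m:ℝ) + 1) := by
    rw [abs_div, abs_pow, abs_neg, abs_one, one_pow, abs_of_pos hc]
  refine ⟨2, by norm_num, fun x hx => ?_, fun _ x hx => ?_⟩
  · -- f2m1 bounds
    have hx0 : x ≠ 0 := by
      intro h; rw [h, abs_zero] at hx; linarith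
    have hxp : (0:ℝ) < |x| := lt_of_lt_of_le one_pos hx
    have hR : |Rm (m+1) x⁻¹| ≤ |x|⁻¹ ^ (2 * (m+1) + 1) := by
      have h := abs_Rm_le (m+1) x⁻¹
      rwa [abs_inv] at h
    constructor
    · -- value bound
      rw [f2m1_eq m x hx0, abs_mul, abs_mul, hcabs, abs_pow]
      have h1 : |x| ^ (2*m+1) * |Rm (m+1) x⁻¹| ≤ |x|⁻¹ ^ 2 := by
        calc |x| ^ (2*m+1) * |Rm (m+1) x⁻¹|
            ≤ |x| ^ (2*m+1) * |x|⁻¹ ^ (2*(m+1)+1) := by gcongr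
          _ = |x|⁻¹ ^ 2 := by
              rw [show 2*(m+1)+1 = (2*m+1) + 2 by ring]
              exact abs_pow_cancel x hx0 (2*m+1) 2
      have h2 : |x|⁻¹ ^ 2 = 1 / x ^ 2 := by
        rw [inv_pow, sq_abs, one_div]
      have hx2 : (0:ℝ) < x ^ 2 := by positivity
      calc 1 / (2 * (m:ℝ) + 1) * (|x| ^ (2*m+1) * |Rm (m+1) x⁻¹|)
          ≤ 1 * (|x|⁻¹ ^ 2) := by
            apply mul_le_mul _ h1 (by positivity) one_pos.le
            rw [div_le_one hc]; exact hc1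
        _ = 1 / x ^ 2 := by rw [one_mul, h2]
        _ ≤ 2 / x ^ 2 := by gcongr <;> norm_num
    · -- derivative bound
      rw [(hasDerivAt_f2m1 m x hx0).deriv]
      have hT1 : |(2 * (m:ℝ) + 1) * x ^ (2*m) * Rm (m+1) x⁻¹|
          ≤ (2 * (m:ℝ) + 1) * |x|⁻¹ ^ 3 := by
        rw [abs_mul, abs_mul, abs_of_pos hc, abs_pow, mul_assoc]
        gcongr
        calc |x| ^ (2*m) * |Rm (m+1) x⁻¹|
            ≤ |x| ^ (2*m) * |x|⁻¹ ^ (2*(m+1)+1) := by gcongr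
          _ = |x|⁻¹ ^ 3 := by
              rw [show 2*(m+1)+1 = 2*m + 3 by ring]
              exact abs_pow_cancel x hx0 (2*m) 3
      have hr : |(-x⁻¹ ^ 2) ^ (m+1) / (1 + x⁻¹ ^ 2)| ≤ |x|⁻¹ ^ (2*m+2) := by
        rw [abs_div]
        have h1 : |(-x⁻¹ ^ 2 : ℝ) ^ (m+1)| = |x|⁻¹ ^ (2*m+2) := by
          rw [abs_pow, abs_neg, abs_pow, abs_inv, ← pow_mul,
            show 2*(m+1) = 2*m+2 by ring]
        rw [h1]
        apply div_le_self (by positivity)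
        rw [abs_of_pos (by positivity)]
        nlinarith [sq_nonneg x⁻¹]
      have habsinv : |(-(x ^ 2)⁻¹ : ℝ)| = |x|⁻¹ ^ 2 := by
        rw [abs_neg, abs_inv, abs_pow, inv_pow]
      have hT2 : |x ^ (2*m+1) * ((-x⁻¹ ^ 2) ^ (m+1) / (1 + x⁻¹ ^ 2) * (-(x ^ 2)⁻¹))|
          ≤ |x|⁻¹ ^ 3 := by
        rw [abs_mul, abs_mul, abs_pow, habsinv]
        calc |x| ^ (2*m+1) * (|(-x⁻¹ ^ 2) ^ (m+1) / (1 + x⁻¹ ^ 2)| * |x|⁻¹ ^ 2)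
            ≤ |x| ^ (2*m+1) * (|x|⁻¹ ^ (2*m+2) * |x|⁻¹ ^ 2) := by gcongr
          _ = |x|⁻¹ ^ 3 := by
              rw [← mul_assoc, show 2*m+2 = (2*m+1) + 1 by ring,
                abs_pow_cancel x hx0 (2*m+1) 1, ← pow_add]
      have hu : (0:ℝ) ≤ |x|⁻¹ ^ 3 := by positivity
      have hfin : 2 * (|x|⁻¹ ^ 3) = 2 / |x| ^ 3 := by
        rw [inv_pow, div_eq_mul_inv]
      calc |(-1:ℝ) ^ (m+1) / (2 * (m:ℝ) + 1) *
              ((2 * (m:ℝ) + 1) * x ^ (2*m) * Rm (m+1) x⁻¹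
                + x ^ (2*m+1) * ((-x⁻¹ ^ 2) ^ (m+1) / (1 + x⁻¹ ^ 2) * (-(x ^ 2)⁻¹)))|
          = 1 / (2 * (m:ℝ) + 1) * |(2 * (m:ℝ) + 1) * x ^ (2*m) * Rm (m+1) x⁻¹
                + x ^ (2*m+1) * ((-x⁻¹ ^ 2) ^ (m+1) / (1 + x⁻¹ ^ 2) * (-(x ^ 2)⁻¹))| := by
            rw [abs_mul, hcabs]
        _ ≤ 1 / (2 * (m:ℝ) + 1) * ((2 * (m:ℝ) + 1) * |x|⁻¹ ^ 3 + |x|⁻¹ ^ 3) := by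
            gcongr
            exact (abs_add_le _ _).trans (by gcongr)
        _ ≤ 2 * (|x|⁻¹ ^ 3) := by
            have he : 1 / (2 * (m:ℝ) + 1) * (2 * (m:ℝ) + 1) = 1 := by
              field_simp
            have h1c : 1 / (2 * (m:ℝ) + 1) ≤ 1 := by
              rw [div_le_one hc]; exact hc1
            nlinarith [mul_le_mul_of_nonneg_right h1c hu]
        _ = 2 / |x| ^ 3 := hfin
  · -- f2m bound
    have hx0 : x ≠ 0 := by
      intro h; rw [h, abs_zero] at hx; linarith
    have hxp : (0:ℝ) < |x| := lt_of_lt_of_le one_pos hx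
    have hR : |Rm (m+1) x⁻¹| ≤ |x|⁻¹ ^ (2 * (m+1) + 1) := by
      have h := abs_Rm_le (m+1) x⁻¹
      rwa [abs_inv] at h
    rw [f2m_eq m x hx0]
    have hA : |1 / ((2 * (m:ℝ) + 1) * (x * (1 + x ^ 2)))| ≤ 1 / |x| ^ 3 := by
      rw [abs_div, abs_one, abs_mul, abs_mul, abs_of_pos hc,
        abs_of_pos (by positivity : (0:ℝ) < 1 + x ^ 2)]
      apply div_le_div_of_nonneg_left one_pos.le (by positivity)
      have e3 : |x| ^ 3 = x ^ 2 * |x| := by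
        rw [pow_succ, sq_abs]
      rw [e3]
      nlinarith [hxp.le, sq_nonneg x, mul_nonneg hxp.le (sq_nonneg x)]
    have hB : |(-1:ℝ) ^ m * (x ^ (2*m) * Rm (m+1) x⁻¹)| ≤ 1 / |x| ^ 3 := by
      rw [abs_mul, abs_pow, abs_neg, abs_one, one_pow, one_mul, abs_mul, abs_pow]
      calc |x| ^ (2*m) * |Rm (m+1) x⁻¹|
          ≤ |x| ^ (2*m) * |x|⁻¹ ^ (2*(m+1)+1) := by gcongr
        _ = |x|⁻¹ ^ 3 := by
            rw [show 2*(m+1)+1 = 2*m + 3 by ring]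
            exact abs_pow_cancel x hx0 (2*m) 3
        _ = 1 / |x| ^ 3 := by rw [inv_pow, one_div]
    calc |1 / ((2 * (m:ℝ) + 1) * (x * (1 + x ^ 2)))
            + (-1:ℝ) ^ m * (x ^ (2*m) * Rm (m+1) x⁻¹)|
        ≤ |1 / ((2 * (m:ℝ) + 1) * (x * (1 + x ^ 2)))|
            + |(-1:ℝ) ^ m * (x ^ (2*m) * Rm (m+1) x⁻¹)| := abs_add_le _ _
      _ ≤ 1 / |x| ^ 3 + 1 / |x| ^ 3 := add_le_add hA hB
      _ = 2 / |x| ^ 3 := by ring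
end

section
/- For every integer m ≥ 0 and every real c > 0, ∫_0^∞ σ^{2m}·log(1 + e^{-cσ}) dσ = (2m)!·(1 - 2^{-2m-1})·ζ(2m+2)/c^{2m+1}. -/
open MeasureTheory Real Set

-- per-term integral
lemma aux_int (n : ℕ) {a : ℝ} (ha : 0 < a) :
    ∫ t in Set.Ioi (0:ℝ), t ^ n * Real.exp (-(a * t)) = (Nat.factorial n : ℝ) / a ^ (n + 1) := by
  have h := integral_rpow_mul_exp_neg_mul_Ioi (a := (n : ℝ) + 1) (r := a) (by positivity) ha
  rw [show ((n:ℝ)+1) - 1 = (n:ℝ) by ring] at h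
  rw [show ((n:ℝ)+1) = ((n+1 : ℕ) : ℝ) by push_cast; ring] at h
  simp_rw [Real.rpow_natCast] at h
  rw [h]; push_cast; rw [Real.Gamma_nat_eq_factorial, one_div, inv_pow, div_eq_mul_inv, mul_comm]

lemma aux_integrable (n : ℕ) {a : ℝ} (ha : 0 < a) :
    IntegrableOn (fun t : ℝ => t ^ n * Real.exp (-(a * t))) (Set.Ioi 0) := by
  have h := integrableOn_rpow_mul_exp_neg_mul_rpow (p := 1) (s := (n:ℝ)) (b := a)
    (by exact_mod_cast lt_of_lt_of_le (by norm_num : (-1:ℝ) < 0) (Nat.cast_nonneg n)) one_pos ha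
  refine h.congr_fun (fun x hx => ?_) measurableSet_Ioi
  dsimp only
  rw [Real.rpow_one, Real.rpow_natCast, neg_mul]


lemma aux_alt {s : ℕ} (hs : 1 < s) :
    ∑' n : ℕ, (-1:ℝ)^n / ((n:ℝ)+1)^s = (1 - 2 / 2^s) * ∑' n : ℕ, 1/((n:ℝ))^s := by
  set Z := ∑' n : ℕ, 1/((n:ℝ))^s with hZ
  set f : ℕ → ℝ := fun n => 1/((n:ℝ)+1)^s with hf
  have hζ : Summable (fun n : ℕ => 1/((n:ℝ))^s) := summable_one_div_nat_pow.mpr hs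
  have hζ' : Summable f := by
    have := (summable_nat_add_iff (f := fun n : ℕ => 1/((n:ℝ))^s) 1).mpr hζ
    simpa [hf] using this
  have hshift : ∑' n : ℕ, f n = Z := by
    rw [hZ, Summable.tsum_eq_zero_add hζ, hf]
    simp [zero_pow (by omega : s ≠ 0)]
  have ha : Summable (fun n : ℕ => (-1:ℝ)^n * f n) := by
    refine Summable.of_norm_bounded hζ' (fun n => ?_)
    rw [norm_mul, norm_pow, norm_neg, norm_one, one_pow, one_mul, hf, Real.norm_eq_abs,
      abs_of_pos (by positivity)]
  have h2k : Function.Injective (fun k : ℕ => 2*k) := fun a b h => by dsimp at h; omega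
  have h2k1 : Function.Injective (fun k : ℕ => 2*k+1) := fun a b h => by dsimp at h; omega
  have keyf := tsum_even_add_odd (f := f) (hζ'.comp_injective h2k) (hζ'.comp_injective h2k1)
  have keya := tsum_even_add_odd (f := fun n : ℕ => (-1:ℝ)^n * f n)
    (ha.comp_injective h2k) (ha.comp_injective h2k1)
  have hO : ∑' k : ℕ, f (2*k+1) = (1/2^s) * Z := by
    have h1 : ∀ k : ℕ, f (2*k+1) = (1/2^s) * f k := by
      intro k
      rw [hf]
      dsimp only
      push_cast
      rw [show ((2*(k:ℝ)+1)+1) = 2*((k:ℝ)+1) by ring, mul_pow]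
      rw [one_div, one_div, one_div, mul_inv]
    rw [tsum_congr h1, tsum_mul_left, hshift]
  have hEa : ∑' k : ℕ, ((-1:ℝ)^(2*k) * f (2*k)) = ∑' k : ℕ, f (2*k) := by
    refine tsum_congr (fun k => ?_)
    rw [pow_mul, neg_one_sq, one_pow, one_mul]
  have hOa : ∑' k : ℕ, ((-1:ℝ)^(2*k+1) * f (2*k+1)) = -∑' k : ℕ, f (2*k+1) := by
    rw [← tsum_neg]
    refine tsum_congr (fun k => ?_)
    rw [pow_succ, pow_mul, neg_one_sq, one_pow, one_mul, neg_one_mul]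
  have hgoal : ∑' n : ℕ, ((-1:ℝ)^n * f n) = Z - 2*((1/2^s)*Z) := by
    rw [← keya, hEa, hOa, hO]
    rw [hshift] at keyf
    rw [hO] at keyf
    linarith
  calc ∑' n : ℕ, (-1:ℝ)^n / ((n:ℝ)+1)^s = ∑' n : ℕ, ((-1:ℝ)^n * f n) := by
        refine tsum_congr (fun n => ?_)
        rw [hf, div_eq_mul_one_div]
    _ = Z - 2*((1/2^s)*Z) := hgoal
    _ = (1 - 2 / 2^s) * Z := by ring

lemma aux_zeta (m : ℕ) :
    (riemannZeta (2*(m:ℂ)+2)).re = ∑' n : ℕ, 1/((n:ℝ))^(2*m+2) := by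
  have h1 : (2*(m:ℂ)+2) = ((2*m+2 : ℕ) : ℂ) := by push_cast; ring
  rw [h1, zeta_nat_eq_tsum_of_gt_one (by omega)]
  have h2 : ∀ n : ℕ, 1/((n:ℂ))^(2*m+2) = ((1/((n:ℝ))^(2*m+2) : ℝ) : ℂ) := by
    intro n; push_cast; ring
  rw [tsum_congr h2, ← Complex.ofReal_tsum, Complex.ofReal_re]

theorem stmt_14 (m : ℕ) (c : ℝ) (hc : 0 < c) :
    ∫ σ in Set.Ioi (0 : ℝ), σ ^ (2 * m) * Real.log (1 + Real.exp (-(c * σ))) =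
      (Nat.factorial (2 * m) : ℝ) * (1 - (2 : ℝ) ^ (-(2 * (m : ℤ)) - 1)) *
        (riemannZeta (2 * (m : ℂ) + 2)).re / c ^ (2 * m + 1) := by
  set F : ℕ → ℝ → ℝ := fun n σ =>
    ((-1:ℝ)^n / ((n:ℝ)+1)) * (σ ^ (2*m) * Real.exp (-((((n:ℝ)+1) * c) * σ))) with hF
  have hpos : ∀ n : ℕ, (0:ℝ) < ((n:ℝ)+1) * c := fun n => by positivity
  have hcne : c ≠ 0 := ne_of_gt hc
  have hFint : ∀ n, Integrable (F n) (volume.restrict (Set.Ioi 0)) := fun n =>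
    ((aux_integrable (2*m) (hpos n)).const_mul _)
  have hFval : ∀ n : ℕ, ∫ σ in Set.Ioi (0:ℝ), F n σ
      = ((-1:ℝ)^n / ((n:ℝ)+1)^(2*m+2)) * ((Nat.factorial (2*m) : ℝ) / c^(2*m+1)) := by
    intro n
    rw [hF]
    dsimp only
    rw [MeasureTheory.integral_const_mul, aux_int (2*m) (hpos n), mul_pow]
    have h1 : ((n:ℝ)+1) ≠ 0 := by positivity
    field_simp
    ring
  have hFnorm : ∀ n : ℕ, ∫ σ in Set.Ioi (0:ℝ), ‖F n σ‖
      = (1 / ((n:ℝ)+1)^(2*m+2)) * ((Nat.factorial (2*m) : ℝ) / c^(2*m+1)) := by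
    intro n
    have hfn : ∀ σ : ℝ, ‖F n σ‖
        = (1/((n:ℝ)+1)) * (σ ^ (2*m) * Real.exp (-((((n:ℝ)+1) * c) * σ))) := by
      intro σ
      rw [hF]
      dsimp only
      rw [norm_mul, norm_div, norm_pow, norm_neg, norm_one, one_pow, Real.norm_eq_abs,
        Real.norm_eq_abs, abs_of_pos (by positivity : (0:ℝ) < (n:ℝ)+1),
        abs_of_nonneg (mul_nonneg (Even.pow_nonneg ⟨m, by ring⟩ σ) (Real.exp_pos _).le)]
    simp_rw [hfn]
    rw [MeasureTheory.integral_const_mul, aux_int (2*m) (hpos n), mul_pow]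
    have h1 : ((n:ℝ)+1) ≠ 0 := by positivity
    field_simp
    ring_nf
  have hsumnorm : Summable (fun n : ℕ => ∫ σ in Set.Ioi (0:ℝ), ‖F n σ‖) := by
    rw [funext hFnorm]
    apply Summable.mul_right
    have hζ : Summable (fun n : ℕ => 1/((n:ℝ))^(2*m+2)) :=
      summable_one_div_nat_pow.mpr (by omega)
    have := (summable_nat_add_iff (f := fun n : ℕ => 1/((n:ℝ))^(2*m+2)) 1).mpr hζ
    simpa using this
  have heq : ∀ σ ∈ Set.Ioi (0:ℝ),
      σ ^ (2*m) * Real.log (1 + Real.exp (-(c*σ))) = ∑' n : ℕ, F n σ := by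
    intro σ hσ
    have hσ0 : (0:ℝ) < σ := hσ
    have hx : |(-Real.exp (-(c*σ)))| < 1 := by
      rw [abs_neg, abs_of_pos (Real.exp_pos _)]
      exact Real.exp_lt_one_iff.mpr (by nlinarith)
    have h := (hasSum_pow_div_log_of_abs_lt_one hx).neg
    rw [sub_neg_eq_add, neg_neg] at h
    have h2 := h.mul_left (σ ^ (2*m))
    refine (HasSum.tsum_eq ?_).symm
    refine h2.congr_fun (fun n => ?_)
    rw [hF]
    dsimp only
    rw [show (-Real.exp (-(c*σ)))^(n+1) = (-1:ℝ)^(n+1) * Real.exp (-(c*σ))^(n+1) by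
      rw [← neg_one_mul, mul_pow]]
    rw [← Real.exp_nat_mul]
    rw [show ((n+1 : ℕ):ℝ) * (-(c*σ)) = -((((n:ℝ)+1) * c) * σ) by push_cast; ring]
    rw [pow_succ]
    push_cast
    ring
  calc ∫ σ in Set.Ioi (0:ℝ), σ ^ (2*m) * Real.log (1 + Real.exp (-(c*σ)))
      = ∫ σ in Set.Ioi (0:ℝ), ∑' n : ℕ, F n σ :=
        setIntegral_congr_fun measurableSet_Ioi heq
    _ = ∑' n : ℕ, ∫ σ in Set.Ioi (0:ℝ), F n σ :=
        (integral_tsum_of_summable_integral_norm hFint hsumnorm).symm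
    _ = ∑' n : ℕ, ((-1:ℝ)^n / ((n:ℝ)+1)^(2*m+2)) * ((Nat.factorial (2*m) : ℝ) / c^(2*m+1)) :=
        tsum_congr hFval
    _ = (∑' n : ℕ, (-1:ℝ)^n / ((n:ℝ)+1)^(2*m+2)) * ((Nat.factorial (2*m) : ℝ) / c^(2*m+1)) :=
        tsum_mul_right
    _ = ((1 - 2 / 2^(2*m+2)) * ∑' n : ℕ, 1/((n:ℝ))^(2*m+2))
          * ((Nat.factorial (2*m) : ℝ) / c^(2*m+1)) := by
        rw [aux_alt (by omega)]
    _ = (Nat.factorial (2 * m) : ℝ) * (1 - (2 : ℝ) ^ (-(2 * (m : ℤ)) - 1)) *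
        (riemannZeta (2 * (m : ℂ) + 2)).re / c ^ (2 * m + 1) := by
        rw [aux_zeta m]
        rw [show (-(2 * (m : ℤ)) - 1) = -((2*m+1 : ℕ) : ℤ) by push_cast; ring]
        rw [zpow_neg, zpow_natCast]
        have h2 : ((2:ℝ)^(2*m+1))⁻¹ = 2 / 2^(2*m+2) := by
          rw [eq_div_iff (by positivity), pow_succ]
          field_simp
          ring
        rw [h2]
        ring
end

section
/- Let n ≥ 2 be an integer and let A⁻, A⁺, B⁻, B⁺, K be positive real constants. Let F: (e^e, ∞) → ℝ be twice continuously differentiable and suppose that for all sufficiently large t: -A⁻·ℓ_n(t) - K·r_{n+1}(t) ≤ F''(t) ≤ A⁺·ℓ_n(t) + K·r_{n+1}(t) and -B⁻·ℓ_{n+2}(t) - K·r_{n+3}(t) ≤ F(t) ≤ B⁺·ℓ_{n+2}(t) + K·r_{n+3}(t). Then there exists a constant K' > 0 such that for all sufficiently large t, |F'(t)| ≤ [ 2(B⁺ + B⁻)·A⁺·A⁻/(A⁺ + A⁻) ]^{1/2}·ℓ_{n+1}(t) + K'·r_{n+2}(t). -/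
set_option maxHeartbeats 1000000

open Real Set Filter

/-- `ℓ_k(t) = log t / (log log t)^k`. -/
noncomputable def ell (k : ℕ) (t : ℝ) : ℝ :=
  Real.log t / (Real.log (Real.log t)) ^ k

/-- `r_k(t) = log t · log log log t / (log log t)^k`. -/
noncomputable def rr (k : ℕ) (t : ℝ) : ℝ :=
  Real.log t * Real.log (Real.log (Real.log t)) / (Real.log (Real.log t)) ^ k

/-- One-sided Taylor bound, expansion at the left endpoint, from a lower bound on `f''`. -/
lemma mvt_taylor_left {F f' f'' : ℝ → ℝ} {x₀ x M : ℝ} (hx : x₀ < x)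
    (hF : ∀ u ∈ Icc x₀ x, HasDerivAt F (f' u) u)
    (hf' : ∀ u ∈ Icc x₀ x, HasDerivAt f' (f'' u) u)
    (hM : ∀ u ∈ Ioo x₀ x, -M ≤ f'' u) :
    (x - x₀) * f' x₀ ≤ F x - F x₀ + M * (x - x₀) ^ 2 / 2 := by
  set g : ℝ → ℝ := fun u => F u + M * u ^ 2 / 2 with hg
  set g' : ℝ → ℝ := fun u => f' u + M * u with hg'
  have hgd : ∀ u ∈ Icc x₀ x, HasDerivAt g (g' u) u := by
    intro u hu
    have h1 : HasDerivAt (fun u : ℝ => M * u ^ 2 / 2) (M * u) u := by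
      have := ((hasDerivAt_pow 2 u).const_mul M).div_const 2
      simpa using this.congr_deriv (by ring)
    exact (hF u hu).add h1
  obtain ⟨ξ, hξ, hslope⟩ := exists_hasDerivAt_eq_slope g g' hx
    (fun u hu => ((hgd u hu).continuousAt).continuousWithinAt)
    (fun u hu => hgd u (Ioo_subset_Icc_self hu))
  -- g' is ≥ g' x₀ at ξ
  have hxi : x₀ < ξ := hξ.1
  have hgd' : ∀ u ∈ Icc x₀ ξ, HasDerivAt g' (f'' u + M) u := by
    intro u hu
    have hu' : u ∈ Icc x₀ x := ⟨hu.1, hu.2.trans hξ.2.le⟩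
    exact (hf' u hu').add (hasDerivAt_id u |>.const_mul M |>.congr_deriv (by ring))
  obtain ⟨ζ, hζ, hslope2⟩ := exists_hasDerivAt_eq_slope g' (fun u => f'' u + M) hxi
    (fun u hu => ((hgd' u hu).continuousAt).continuousWithinAt)
    (fun u hu => hgd' u (Ioo_subset_Icc_self hu))
  have hζ' : ζ ∈ Ioo x₀ x := ⟨hζ.1, hζ.2.trans hξ.2⟩
  have h0 : 0 ≤ f'' ζ + M := by have := hM ζ hζ'; linarith
  have hmono : g' x₀ ≤ g' ξ := by
    have hpos : 0 < ξ - x₀ := by linarith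
    have heq : g' ξ - g' x₀ = (f'' ζ + M) * (ξ - x₀) := by
      field_simp at hslope2; linarith [hslope2]
    nlinarith [mul_nonneg h0 hpos.le]
  have hxx : 0 < x - x₀ := by linarith
  have hle : g' x₀ ≤ (g x - g x₀) / (x - x₀) := by rw [← hslope]; exact hmono
  have h2 : (x - x₀) * g' x₀ ≤ g x - g x₀ := by
    calc (x - x₀) * g' x₀ ≤ (x - x₀) * ((g x - g x₀) / (x - x₀)) :=
          mul_le_mul_of_nonneg_left hle hxx.le
      _ = g x - g x₀ := by field_simp
  have key : g x - g x₀ = F x - F x₀ + M * (x ^ 2 - x₀ ^ 2) / 2 := by simp [hg]; ring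
  have : (x - x₀) * (f' x₀ + M * x₀) ≤ F x - F x₀ + M * (x ^ 2 - x₀ ^ 2) / 2 := by
    rw [← key]; exact h2
  nlinarith [this]

/-- One-sided Taylor bound, expansion at the right endpoint, from an upper bound on `f''`. -/
lemma mvt_taylor_right {F f' f'' : ℝ → ℝ} {x₀ x M : ℝ} (hx : x₀ < x)
    (hF : ∀ u ∈ Icc x₀ x, HasDerivAt F (f' u) u)
    (hf' : ∀ u ∈ Icc x₀ x, HasDerivAt f' (f'' u) u)
    (hM : ∀ u ∈ Ioo x₀ x, f'' u ≤ M) :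
    (x - x₀) * f' x ≤ F x - F x₀ + M * (x - x₀) ^ 2 / 2 := by
  set g : ℝ → ℝ := fun u => F u - M * u ^ 2 / 2 with hg
  set g' : ℝ → ℝ := fun u => f' u - M * u with hg'
  have hgd : ∀ u ∈ Icc x₀ x, HasDerivAt g (g' u) u := by
    intro u hu
    have h1 : HasDerivAt (fun u : ℝ => M * u ^ 2 / 2) (M * u) u := by
      have := ((hasDerivAt_pow 2 u).const_mul M).div_const 2
      simpa using this.congr_deriv (by ring)
    exact (hF u hu).sub h1
  obtain ⟨ξ, hξ, hslope⟩ := exists_hasDerivAt_eq_slope g g' hx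
    (fun u hu => ((hgd u hu).continuousAt).continuousWithinAt)
    (fun u hu => hgd u (Ioo_subset_Icc_self hu))
  have hxi : ξ < x := hξ.2
  have hgd' : ∀ u ∈ Icc ξ x, HasDerivAt g' (f'' u - M) u := by
    intro u hu
    have hu' : u ∈ Icc x₀ x := ⟨hξ.1.le.trans hu.1, hu.2⟩
    exact (hf' u hu').sub (hasDerivAt_id u |>.const_mul M |>.congr_deriv (by ring))
  obtain ⟨ζ, hζ, hslope2⟩ := exists_hasDerivAt_eq_slope g' (fun u => f'' u - M) hxi
    (fun u hu => ((hgd' u hu).continuousAt).continuousWithinAt)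
    (fun u hu => hgd' u (Ioo_subset_Icc_self hu))
  have hζ' : ζ ∈ Ioo x₀ x := ⟨hξ.1.trans hζ.1, hζ.2⟩
  have h0 : f'' ζ - M ≤ 0 := by have := hM ζ hζ'; linarith
  have hmono : g' x ≤ g' ξ := by
    have hpos : 0 < x - ξ := by linarith
    have heq : g' x - g' ξ = (f'' ζ - M) * (x - ξ) := by
      field_simp at hslope2; linarith [hslope2]
    nlinarith [mul_nonpos_of_nonpos_of_nonneg h0 hpos.le]
  have hxx : 0 < x - x₀ := by linarith
  have h2 : (x - x₀) * g' x ≤ g x - g x₀ := by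
    have : g' x ≤ (g x - g x₀) / (x - x₀) := by rw [← hslope]; exact hmono
    calc (x - x₀) * g' x ≤ (x - x₀) * ((g x - g x₀) / (x - x₀)) :=
          mul_le_mul_of_nonneg_left this hxx.le
      _ = g x - g x₀ := by field_simp
  have key : g x - g x₀ = F x - F x₀ - M * (x ^ 2 - x₀ ^ 2) / 2 := by simp [hg]; ring
  have h3 : (x - x₀) * (f' x - M * x) ≤ F x - F x₀ - M * (x ^ 2 - x₀ ^ 2) / 2 := by
    rw [← key]; exact h2
  nlinarith [h3]

section window

variable {t ξ : ℝ}

lemma window_basic (ht : 3 ≤ t) (hL : 4 ≤ Real.log t) (hLL : 2 ≤ Real.log (Real.log t))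
    (hξ : ξ ∈ Icc (t - 1) (t + 1)) :
    Real.log ξ ≤ Real.log t + 1 ∧ Real.log t - 1 ≤ Real.log ξ ∧
      Real.log (Real.log t) - 2 / Real.log t ≤ Real.log (Real.log ξ) ∧
      Real.log (Real.log ξ) ≤ Real.log (Real.log t) + 1 := by
  set L := Real.log t with hLdef
  have htm : (2:ℝ) ≤ t - 1 := by linarith
  have hξpos : (0:ℝ) < ξ := by have := hξ.1; linarith
  have h2 : Real.log ξ ≤ L + 1 := by
    calc Real.log ξ ≤ Real.log (t + 1) := Real.log_le_log hξpos hξ.2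
      _ ≤ Real.log (2 * t) := Real.log_le_log (by linarith) (by linarith)
      _ = Real.log 2 + L := Real.log_mul (by norm_num) (by linarith)
      _ ≤ L + 1 := by have := Real.log_two_lt_d9; linarith
  have hsub : Real.log t - Real.log (t - 1) ≤ 1 := by
    have h3 : Real.log t - Real.log (t - 1) = Real.log (t / (t - 1)) :=
      (Real.log_div (by linarith) (by linarith)).symm
    have h4 : Real.log (t / (t - 1)) ≤ t / (t - 1) - 1 :=
      Real.log_le_sub_one_of_pos (div_pos (by linarith) (by linarith))
    have hne : t - 1 ≠ 0 := by linarith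
    have h5 : t / (t - 1) - 1 = 1 / (t - 1) := by field_simp; ring
    have h6 : 1 / (t - 1) ≤ 1 := by rw [div_le_one (by linarith)]; linarith
    linarith
  have h3 : L - 1 ≤ Real.log ξ := by
    have := Real.log_le_log (by linarith : (0:ℝ) < t - 1) hξ.1
    linarith
  have hLsub : Real.log L - Real.log (L - 1) ≤ 2 / L := by
    have h3' : Real.log L - Real.log (L - 1) = Real.log (L / (L - 1)) :=
      (Real.log_div (by linarith) (by linarith)).symm
    have h4 : Real.log (L / (L - 1)) ≤ L / (L - 1) - 1 :=
      Real.log_le_sub_one_of_pos (div_pos (by linarith) (by linarith))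
    have hne : L - 1 ≠ 0 := by linarith
    have h5 : L / (L - 1) - 1 = 1 / (L - 1) := by field_simp; ring
    have h6 : 1 / (L - 1) ≤ 2 / L := by
      rw [div_le_div_iff₀ (by linarith) (by linarith)]; linarith
    linarith
  have h4 : Real.log L - 2 / L ≤ Real.log (Real.log ξ) := by
    have := Real.log_le_log (by linarith : (0:ℝ) < L - 1) h3
    linarith
  have h5 : Real.log (Real.log ξ) ≤ Real.log L + 1 := by
    calc Real.log (Real.log ξ) ≤ Real.log (L + 1) :=
          Real.log_le_log (by linarith) h2
      _ ≤ Real.log (2 * L) := Real.log_le_log (by linarith) (by linarith)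
      _ = Real.log 2 + Real.log L := Real.log_mul (by norm_num) (by linarith)
      _ ≤ Real.log L + 1 := by have := Real.log_two_lt_d9; linarith
  exact ⟨h2, h3, h4, h5⟩

lemma ell_window (k : ℕ) (hk : 1 ≤ k) (ht : 3 ≤ t)
    (hL : 4 * (k : ℝ) ≤ Real.log t) (hLL : (k : ℝ) + 2 ≤ Real.log (Real.log t))
    (hξ : ξ ∈ Icc (t - 1) (t + 1)) : ell k ξ ≤ ell k t + 2 := by
  have hk1 : (1:ℝ) ≤ (k:ℝ) := by exact_mod_cast hk
  have hL4 : (4:ℝ) ≤ Real.log t := by nlinarith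
  have hLL2 : (2:ℝ) ≤ Real.log (Real.log t) := by linarith
  obtain ⟨h2, h3, h4, h5⟩ := window_basic ht hL4 hLL2 hξ
  have hellξ : ell k ξ = Real.log ξ / (Real.log (Real.log ξ)) ^ k := rfl
  have hellt : ell k t = Real.log t / (Real.log (Real.log t)) ^ k := rfl
  rw [hellξ, hellt]
  set Lx := Real.log ξ with hLxdef
  set LLx := Real.log Lx with hLLxdef
  set L := Real.log t with hLdef
  set LL := Real.log L with hLLdef
  clear_value Lx LLx L LL
  clear hellξ hellt hLxdef hLLxdef hLdef hLLdef hξ ht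
  have hLpos : (0:ℝ) < L := by linarith
  have hLLpos : (0:ℝ) < LL := by linarith
  set θ : ℝ := 2 / (L * LL) with hθdef
  have hθpos : 0 < θ := by positivity
  have hkθ : (k:ℝ) * θ ≤ 1 / 4 := by
    have hpos : (0:ℝ) < L * LL := by positivity
    have heq : (k:ℝ) * θ = 2 * (k:ℝ) / (L * LL) := by rw [hθdef]; ring
    rw [heq, div_le_div_iff₀ hpos (by norm_num)]
    nlinarith
  have hθ4 : θ ≤ 1 / 4 := by nlinarith
  have hrw : LL - 2 / L = LL * (1 - θ) := by
    rw [hθdef]; field_simp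
  have he1 : (k:ℝ) * θ * L ≤ (k:ℝ) := by
    have heq : (k:ℝ) * θ * L = 2 * (k:ℝ) / LL := by rw [hθdef]; field_simp
    rw [heq, div_le_iff₀ hLLpos]; nlinarith
  clear_value θ
  clear hθdef
  have hLLξl : LL * (1 - θ) ≤ LLx := by rw [← hrw]; exact h4
  have hnn : (0:ℝ) ≤ LL * (1 - θ) := by nlinarith
  have hbern : 1 + (k:ℝ) * (-θ) ≤ (1 + -θ) ^ k := one_add_mul_le_pow (by linarith) k
  have hP : (0:ℝ) < LL ^ k := by positivity
  have hB : LL ^ k * (1 - (k:ℝ) * θ) ≤ (LL * (1 - θ)) ^ k := by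
    have hm := mul_le_mul_of_nonneg_left hbern hP.le
    calc LL ^ k * (1 - (k:ℝ) * θ) = LL ^ k * (1 + (k:ℝ) * (-θ)) := by ring
      _ ≤ LL ^ k * (1 + -θ) ^ k := hm
      _ = (LL * (1 + -θ)) ^ k := (mul_pow _ _ _).symm
      _ = (LL * (1 - θ)) ^ k := by ring_nf
  have hden : (0:ℝ) < LL ^ k * (1 - (k:ℝ) * θ) := by nlinarith
  have hpow : LL ^ k * (1 - (k:ℝ) * θ) ≤ LLx ^ k :=
    hB.trans (pow_le_pow_left₀ hnn hLLξl k)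
  have hstep : Lx / LLx ^ k ≤ (L + 1) / (LL ^ k * (1 - (k:ℝ) * θ)) :=
    div_le_div₀ (by linarith) h2 hden hpow
  have hfinal : (L + 1) / (LL ^ k * (1 - (k:ℝ) * θ)) ≤ L / LL ^ k + 2 := by
    rw [div_le_iff₀ hden]
    have expand : (L / LL ^ k + 2) * (LL ^ k * (1 - (k:ℝ) * θ)) =
        (L + 2 * LL ^ k) * (1 - (k:ℝ) * θ) := by field_simp
    rw [expand]
    have he2 : (k:ℝ) * θ * LL ^ k ≤ LL ^ k / 4 := by
      nlinarith [mul_le_mul_of_nonneg_right hkθ hP.le]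
    have he3 : (k:ℝ) + 2 ≤ LL ^ k := by
      calc (k:ℝ) + 2 ≤ LL := hLL
        _ ≤ LL ^ k := le_self_pow₀ (by linarith) (by omega)
    have expand2 : (L + 2 * LL ^ k) * (1 - (k:ℝ) * θ) =
        L + 2 * LL ^ k - (k:ℝ) * θ * L - 2 * ((k:ℝ) * θ * LL ^ k) := by ring
    rw [expand2]; linarith
  linarith

lemma rr_window (k : ℕ) (ht : 3 ≤ t)
    (hL : 4 ≤ Real.log t) (hLL : 2 ≤ Real.log (Real.log t))
    (hLLL : 1 ≤ Real.log (Real.log (Real.log t)))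
    (hξ : ξ ∈ Icc (t - 1) (t + 1)) : rr k ξ ≤ 2 ^ (k + 2) * rr k t := by
  obtain ⟨h2, h3, h4, h5⟩ := window_basic ht hL hLL hξ
  have hLLLξu : Real.log (Real.log (Real.log ξ)) ≤ 2 * Real.log (Real.log (Real.log t)) := by
    have hLLξpos : (0:ℝ) < Real.log (Real.log ξ) := by
      have : 2 / Real.log t ≤ 1 := by
        rw [div_le_one (by linarith)]; linarith
      linarith
    calc Real.log (Real.log (Real.log ξ)) ≤ Real.log (Real.log (Real.log t) + 1) :=
          Real.log_le_log hLLξpos h5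
      _ ≤ Real.log (2 * Real.log (Real.log t)) :=
          Real.log_le_log (by linarith) (by linarith)
      _ = Real.log 2 + Real.log (Real.log (Real.log t)) :=
          Real.log_mul (by norm_num) (by linarith)
      _ ≤ 2 * Real.log (Real.log (Real.log t)) := by have := Real.log_two_lt_d9; linarith
  have hLLLξnn : 0 ≤ Real.log (Real.log (Real.log ξ)) := by
    apply Real.log_nonneg
    have : 2 / Real.log t ≤ 1 := by rw [div_le_one (by linarith)]; linarith
    linarith
  have hrrξ : rr k ξ = Real.log ξ * Real.log (Real.log (Real.log ξ)) / (Real.log (Real.log ξ)) ^ k := rfl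
  have hrrt : rr k t = Real.log t * Real.log (Real.log (Real.log t)) / (Real.log (Real.log t)) ^ k := rfl
  rw [hrrξ, hrrt]
  set Lx := Real.log ξ with hLxdef
  set LLx := Real.log Lx with hLLxdef
  set LLLx := Real.log LLx with hLLLxdef
  set L := Real.log t with hLdef
  set LL := Real.log L with hLLdef
  set LLL := Real.log LL with hLLLdef
  clear_value Lx LLx LLLx L LL LLL
  clear hrrξ hrrt hLxdef hLLxdef hLLLxdef hLdef hLLdef hLLLdef hξ ht
  have hLpos : (0:ℝ) < L := by linarith
  have hLLξl : LL / 2 ≤ LLx := by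
    have : 2 / L ≤ 1 := by rw [div_le_one hLpos]; linarith
    linarith
  have hLξnn : 0 ≤ Lx := by linarith
  have hnum : Lx * LLLx ≤ (2 * L) * (2 * LLL) :=
    mul_le_mul (by linarith) hLLLξu hLLLξnn (by linarith)
  have hdenpos : (0:ℝ) < (LL / 2) ^ k := by positivity
  have hdenle : (LL / 2) ^ k ≤ LLx ^ k := pow_le_pow_left₀ (by linarith) hLLξl k
  have hstep : Lx * LLLx / LLx ^ k ≤ (2 * L) * (2 * LLL) / (LL / 2) ^ k :=
    div_le_div₀ (by positivity) hnum hdenpos hdenle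
  have hLLpos : (0:ℝ) < LL := by linarith
  have heq : (2 * L) * (2 * LLL) / (LL / 2) ^ k = 2 ^ (k + 2) * (L * LLL / LL ^ k) := by
    rw [div_pow, pow_add]
    field_simp
  linarith [hstep, heq ▸ hstep]

end window
lemma deriv_bound {F f' f'' : ℝ → ℝ} {t a b M₁ M₂ : ℝ} (ha : 0 < a) (hb : 0 < b)
    (hF : ∀ u ∈ Icc (t - b) (t + a), HasDerivAt F (f' u) u)
    (hf' : ∀ u ∈ Icc (t - b) (t + a), HasDerivAt f' (f'' u) u)
    (h1 : ∀ u ∈ Ioo t (t + a), -M₁ ≤ f'' u)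
    (h2 : ∀ u ∈ Ioo (t - b) t, f'' u ≤ M₂) :
    (a + b) * f' t ≤ F (t + a) - F (t - b) + (M₁ * a ^ 2 + M₂ * b ^ 2) / 2 := by
  have hsub1 : Icc t (t + a) ⊆ Icc (t - b) (t + a) := Icc_subset_Icc (by linarith) le_rfl
  have hsub2 : Icc (t - b) t ⊆ Icc (t - b) (t + a) := Icc_subset_Icc le_rfl (by linarith)
  have hfwd := mvt_taylor_left (show t < t + a by linarith)
    (fun u hu => hF u (hsub1 hu)) (fun u hu => hf' u (hsub1 hu)) h1
  have hbwd := mvt_taylor_right (show t - b < t by linarith)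
    (fun u hu => hF u (hsub2 hu)) (fun u hu => hf' u (hsub2 hu)) h2
  have e1 : t + a - t = a := by ring
  have e2 : t - (t - b) = b := by ring
  rw [e1] at hfwd
  rw [e2] at hbwd
  have e3 : (a + b) * f' t = a * f' t + b * f' t := by ring
  rw [e3]
  linarith

lemma one_side (n : ℕ) (S C0 K' Am Ap K : ℝ) (F f' f'' : ℝ → ℝ) (t : ℝ)
    (hAm : 0 < Am) (hAp : 0 < Ap) (hK : 0 < K) (hS : 0 < S) (hC0 : 0 < C0)
    (hC0sq : C0 ^ 2 = 2 * S * (Am * Ap / (Am + Ap)))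
    (hK' : 2 * S * (Am * Ap / (Am + Ap)) / C0 + 2 ^ (n + 6) * K * (Am * Ap / (Am + Ap)) / C0
        + C0 + C0 * (Am * Ap / (Am + Ap)) * K * (1 / Am ^ 2 + 1 / Ap ^ 2) * 2 ^ (n + 3) / 2 ≤ K')
    (hder : ∀ u ∈ Icc (t - 1) (t + 1), HasDerivAt F (f' u) u)
    (hder' : ∀ u ∈ Icc (t - 1) (t + 1), HasDerivAt f' (f'' u) u)
    (hlo : ∀ u ∈ Icc (t - 1) (t + 1),
      -(Am * (ell n t + 2) + K * 2 ^ (n + 3) * rr (n + 1) t) ≤ f'' u)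
    (hhi : ∀ u ∈ Icc (t - 1) (t + 1),
      f'' u ≤ Ap * (ell n t + 2) + K * 2 ^ (n + 3) * rr (n + 1) t)
    (hFd : ∀ u ∈ Icc (t - 1) (t + 1), ∀ v ∈ Icc (t - 1) (t + 1),
      F u - F v ≤ S * (ell (n + 2) t + 2) + 2 ^ (n + 6) * K * rr (n + 3) t)
    (hx2 : 2 ≤ Real.log (Real.log t)) (hLpos : 0 < Real.log t)
    (hCAm : C0 ≤ Am * Real.log (Real.log t)) (hCAp : C0 ≤ Ap * Real.log (Real.log t))
    (hr2x : Real.log (Real.log t) ≤ rr (n + 2) t) (hr21 : 1 ≤ rr (n + 2) t) :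
    f' t ≤ C0 * ell (n + 1) t + K' * rr (n + 2) t := by
  set x := Real.log (Real.log t) with hxdef
  have hx0 : (0:ℝ) < x := by linarith
  have hxne : x ≠ 0 := hx0.ne'
  -- identities
  have id2 : ell n t = ell (n + 1) t * x := by
    unfold ell; rw [← hxdef, pow_succ]; field_simp
  have idA : ell (n + 2) t = ell (n + 1) t / x := by
    unfold ell; rw [← hxdef, pow_succ, ← div_div]
  have id4 : rr (n + 1) t = rr (n + 2) t * x := by
    unfold rr; rw [← hxdef, pow_succ]; field_simp; ring
  have idB : rr (n + 3) t = rr (n + 2) t / x := by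
    unfold rr; rw [← hxdef, pow_succ, ← div_div]
  clear_value x
  clear hxdef
  have ha : (0:ℝ) < C0 / (x * Am) := by positivity
  have hb : (0:ℝ) < C0 / (x * Ap) := by positivity
  have ha1 : C0 / (x * Am) ≤ 1 := by
    rw [div_le_one (by positivity)]; nlinarith
  have hb1 : C0 / (x * Ap) ≤ 1 := by
    rw [div_le_one (by positivity)]; nlinarith
  have hsub : Icc (t - C0 / (x * Ap)) (t + C0 / (x * Am)) ⊆ Icc (t - 1) (t + 1) :=
    Icc_subset_Icc (by linarith) (by linarith)
  have hkey := deriv_bound (t := t) (a := C0 / (x * Am)) (b := C0 / (x * Ap))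
    (M₁ := Am * (ell n t + 2) + K * 2 ^ (n + 3) * rr (n + 1) t)
    (M₂ := Ap * (ell n t + 2) + K * 2 ^ (n + 3) * rr (n + 1) t)
    ha hb
    (fun u hu => hder u (hsub hu)) (fun u hu => hder' u (hsub hu))
    (fun u hu => hlo u (hsub ⟨by linarith [hu.1, hb.le], hu.2.le⟩))
    (fun u hu => hhi u (hsub ⟨hu.1.le, by linarith [hu.2, ha.le]⟩))
  have hmemp : t + C0 / (x * Am) ∈ Icc (t - 1) (t + 1) :=
    ⟨by linarith, by linarith⟩
  have hmemm : t - C0 / (x * Ap) ∈ Icc (t - 1) (t + 1) :=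
    ⟨by linarith, by linarith⟩
  have hU := hFd _ hmemp _ hmemm
  have hkey2 : (C0 / (x * Am) + C0 / (x * Ap)) * f' t ≤
      S * (ell (n + 2) t + 2) + 2 ^ (n + 6) * K * rr (n + 3) t +
      ((Am * (ell n t + 2) + K * 2 ^ (n + 3) * rr (n + 1) t) * (C0 / (x * Am)) ^ 2 +
       (Ap * (ell n t + 2) + K * 2 ^ (n + 3) * rr (n + 1) t) * (C0 / (x * Ap)) ^ 2) / 2 := by
    linarith
  rw [id2, id4, idA, idB] at hkey2
  set ℓ1 := ell (n + 1) t with hl1def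
  set r2 := rr (n + 2) t with hr2def
  clear_value ℓ1 r2
  have hEpos : (0:ℝ) < x * (Am * Ap / (Am + Ap)) / C0 := by positivity
  have h6 := mul_le_mul_of_nonneg_left hkey2 hEpos.le
  have hident : x * (Am * Ap / (Am + Ap)) / C0 * ((C0 / (x * Am) + C0 / (x * Ap)) * f' t)
      = f' t := by
    field_simp
    ring
  rw [hident] at h6
  have h7 : x * (Am * Ap / (Am + Ap)) / C0 *
      (S * (ℓ1 / x + 2) + 2 ^ (n + 6) * K * (r2 / x) +
      ((Am * (ℓ1 * x + 2) + K * 2 ^ (n + 3) * (r2 * x)) * (C0 / (x * Am)) ^ 2 +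
       (Ap * (ℓ1 * x + 2) + K * 2 ^ (n + 3) * (r2 * x)) * (C0 / (x * Ap)) ^ 2) / 2)
      = (S * (Am * Ap / (Am + Ap)) / C0 + C0 / 2) * ℓ1
        + (2 * S * (Am * Ap / (Am + Ap)) / C0) * x
        + (2 ^ (n + 6) * K * (Am * Ap / (Am + Ap)) / C0) * r2
        + C0 / x
        + (C0 * (Am * Ap / (Am + Ap)) * K * (1 / Am ^ 2 + 1 / Ap ^ 2) * 2 ^ (n + 3) / 2) * r2 := by
    field_simp
    ring
  rw [h7] at h6
  have hCC : S * (Am * Ap / (Am + Ap)) / C0 + C0 / 2 = C0 := by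
    have h1 : S * (Am * Ap / (Am + Ap)) = C0 ^ 2 / 2 := by rw [hC0sq]; ring
    rw [h1]
    field_simp
    ring
  rw [hCC] at h6
  have b1 : (2 * S * (Am * Ap / (Am + Ap)) / C0) * x ≤ (2 * S * (Am * Ap / (Am + Ap)) / C0) * r2 :=
    mul_le_mul_of_nonneg_left hr2x (by positivity)
  have b2 : C0 / x ≤ C0 := div_le_self hC0.le (by linarith)
  have b3 : C0 ≤ C0 * r2 := le_mul_of_one_le_right hC0.le hr21
  have b4 := mul_le_mul_of_nonneg_right hK' (by linarith : (0:ℝ) ≤ r2)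
  nlinarith [h6, b1, b2, b3, b4]

theorem stmt_17 (n : ℕ) (hn : 2 ≤ n) (Am Ap Bm Bp K : ℝ)
    (hAm : 0 < Am) (hAp : 0 < Ap) (hBm : 0 < Bm) (hBp : 0 < Bp) (hK : 0 < K)
    (F : ℝ → ℝ)
    (hF : ContDiffOn ℝ 2 F (Set.Ioi (Real.exp (Real.exp 1))))
    (hF'' : ∃ T, ∀ t : ℝ, T ≤ t →
      -Am * ell n t - K * rr (n + 1) t ≤ deriv (deriv F) t ∧
      deriv (deriv F) t ≤ Ap * ell n t + K * rr (n + 1) t)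
    (hFb : ∃ T, ∀ t : ℝ, T ≤ t →
      -Bm * ell (n + 2) t - K * rr (n + 3) t ≤ F t ∧
      F t ≤ Bp * ell (n + 2) t + K * rr (n + 3) t) :
    ∃ K' > 0, ∃ T', ∀ t : ℝ, T' ≤ t →
      |deriv F t| ≤
        Real.sqrt (2 * (Bp + Bm) * Ap * Am / (Ap + Am)) * ell (n + 1) t
          + K' * rr (n + 2) t := by
  obtain ⟨T1, hT1⟩ := hF''
  obtain ⟨T2, hT2⟩ := hFb
  set S : ℝ := Bp + Bm with hSdef
  have hS : 0 < S := by positivity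
  set C0 : ℝ := Real.sqrt (2 * (Bp + Bm) * Ap * Am / (Ap + Am)) with hC0def
  have hC0pos : 0 < C0 := Real.sqrt_pos.2 (by positivity)
  have hC0sq1 : C0 ^ 2 = 2 * S * (Am * Ap / (Am + Ap)) := by
    rw [hC0def, Real.sq_sqrt (by positivity)]
    rw [hSdef]
    ring
  have hC0sq2 : C0 ^ 2 = 2 * S * (Ap * Am / (Ap + Am)) := by rw [hC0sq1]; ring
  set K' : ℝ := 2 * S * (Am * Ap / (Am + Ap)) / C0 + 2 ^ (n + 6) * K * (Am * Ap / (Am + Ap)) / C0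
      + C0 + C0 * (Am * Ap / (Am + Ap)) * K * (1 / Am ^ 2 + 1 / Ap ^ 2) * 2 ^ (n + 3) / 2
    with hK'def
  have hK'pos : 0 < K' := by rw [hK'def]; positivity
  have hK'1 : 2 * S * (Am * Ap / (Am + Ap)) / C0 + 2 ^ (n + 6) * K * (Am * Ap / (Am + Ap)) / C0
      + C0 + C0 * (Am * Ap / (Am + Ap)) * K * (1 / Am ^ 2 + 1 / Ap ^ 2) * 2 ^ (n + 3) / 2
      ≤ K' := le_of_eq hK'def.symm
  have hK'2 : 2 * S * (Ap * Am / (Ap + Am)) / C0 + 2 ^ (n + 6) * K * (Ap * Am / (Ap + Am)) / C0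
      + C0 + C0 * (Ap * Am / (Ap + Am)) * K * (1 / Ap ^ 2 + 1 / Am ^ 2) * 2 ^ (n + 3) / 2
      ≤ K' := by rw [hK'def]; apply le_of_eq; ring
  -- derivative facts
  have hdiff1 : ∀ u ∈ Ioi (Real.exp (Real.exp 1)), HasDerivAt F (deriv F u) u := by
    intro u hu
    exact ((hF.differentiableOn (by norm_num)).differentiableAt
      (isOpen_Ioi.mem_nhds hu)).hasDerivAt
  have hcd1 : ContDiffOn ℝ 1 (deriv F) (Ioi (Real.exp (Real.exp 1))) := by
    have := hF.deriv_of_isOpen isOpen_Ioi (by norm_num : (1:WithTop ℕ∞) + 1 ≤ 2)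
    exact this
  have hdiff2 : ∀ u ∈ Ioi (Real.exp (Real.exp 1)),
      HasDerivAt (deriv F) (deriv (deriv F) u) u := by
    intro u hu
    exact ((hcd1.differentiableOn (by norm_num)).differentiableAt
      (isOpen_Ioi.mem_nhds hu)).hasDerivAt
  -- tendsto facts
  have hlogT : Tendsto Real.log atTop atTop := Real.tendsto_log_atTop
  have hllT : Tendsto (fun t : ℝ => Real.log (Real.log t)) atTop atTop := hlogT.comp hlogT
  have hlllT : Tendsto (fun t : ℝ => Real.log (Real.log (Real.log t))) atTop atTop :=
    hlogT.comp hllT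
  have c1 : ∀ᶠ t : ℝ in atTop, max T1 T2 ≤ t - 1 := by
    filter_upwards [eventually_ge_atTop (max T1 T2 + 1)] with t ht; linarith
  have c2 : ∀ᶠ t : ℝ in atTop, Real.exp (Real.exp 1) < t - 1 := by
    filter_upwards [eventually_ge_atTop (Real.exp (Real.exp 1) + 2)] with t ht; linarith
  have c3 : ∀ᶠ t : ℝ in atTop, (3:ℝ) ≤ t := eventually_ge_atTop 3
  have c4 : ∀ᶠ t : ℝ in atTop, 4 * ((n:ℝ) + 3) ≤ Real.log t :=
    hlogT.eventually_ge_atTop _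
  have c5 : ∀ᶠ t : ℝ in atTop, (n:ℝ) + 5 ≤ Real.log (Real.log t) :=
    hllT.eventually_ge_atTop _
  have c6 : ∀ᶠ t : ℝ in atTop, (1:ℝ) ≤ Real.log (Real.log (Real.log t)) :=
    hlllT.eventually_ge_atTop _
  have c7a : ∀ᶠ t : ℝ in atTop, C0 ≤ Am * Real.log (Real.log t) := by
    filter_upwards [hllT.eventually_ge_atTop (C0 / Am)] with t ht
    rw [div_le_iff₀ hAm] at ht
    linarith [ht]
  have c7b : ∀ᶠ t : ℝ in atTop, C0 ≤ Ap * Real.log (Real.log t) := by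
    filter_upwards [hllT.eventually_ge_atTop (C0 / Ap)] with t ht
    rw [div_le_iff₀ hAp] at ht
    linarith [ht]
  have c8 : ∀ᶠ t : ℝ in atTop, (Real.log (Real.log t)) ^ (n + 3) ≤ Real.log t := by
    have h8y : ∀ᶠ y : ℝ in atTop, y ^ (n + 3) ≤ Real.exp y := by
      filter_upwards [(Real.tendsto_exp_div_pow_atTop (n + 3)).eventually_ge_atTop 1,
        eventually_gt_atTop (0:ℝ)] with y hy hy0
      rw [le_div_iff₀ (by positivity)] at hy
      linarith
    filter_upwards [hllT.eventually h8y, hlogT.eventually_gt_atTop 0] with t ht hpos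
    have : Real.exp (Real.log (Real.log t)) = Real.log t := Real.exp_log hpos
    simpa [this] using ht
  have hev : ∀ᶠ t : ℝ in atTop,
      |deriv F t| ≤ C0 * ell (n + 1) t + K' * rr (n + 2) t := by
    filter_upwards [c1, c2, c3, c4, c5, c6, c7a, c7b, c8] with t hTt hexp ht3 hLbig hLLbig
      hLLL1 hAmLL hApLL hpow
    have hn3 : (0:ℝ) ≤ (n:ℝ) := Nat.cast_nonneg n
    have hL4 : (4:ℝ) ≤ Real.log t := by linarith
    have hLL2 : (2:ℝ) ≤ Real.log (Real.log t) := by linarith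
    have hLpos : (0:ℝ) < Real.log t := by linarith
    have hLLpos : (0:ℝ) < Real.log (Real.log t) := by linarith
    -- window memberships
    have hmem : ∀ u ∈ Icc (t - 1) (t + 1), u ∈ Ioi (Real.exp (Real.exp 1)) := by
      intro u hu
      have := hu.1
      simp only [mem_Ioi]
      linarith
    have hmemT : ∀ u ∈ Icc (t - 1) (t + 1), max T1 T2 ≤ u := by
      intro u hu
      have := hu.1
      linarith
    have hders : ∀ u ∈ Icc (t - 1) (t + 1), HasDerivAt F (deriv F u) u :=
      fun u hu => hdiff1 u (hmem u hu)
    have hders2 : ∀ u ∈ Icc (t - 1) (t + 1), HasDerivAt (deriv F) (deriv (deriv F) u) u :=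
      fun u hu => hdiff2 u (hmem u hu)
    -- second-derivative window bounds
    have wbounds : ∀ u ∈ Icc (t - 1) (t + 1),
        -(Am * (ell n t + 2) + K * 2 ^ (n + 3) * rr (n + 1) t) ≤ deriv (deriv F) u ∧
        deriv (deriv F) u ≤ Ap * (ell n t + 2) + K * 2 ^ (n + 3) * rr (n + 1) t := by
      intro u hu
      have hb := hT1 u (le_trans (le_max_left T1 T2) (hmemT u hu))
      have hw1 : ell n u ≤ ell n t + 2 := by
        apply ell_window n (by omega) ht3 _ _ hu
        · push_cast; linarith
        · push_cast; linarith
      have hw2 : rr (n + 1) u ≤ 2 ^ (n + 3) * rr (n + 1) t := by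
        have := rr_window (n + 1) ht3 hL4 hLL2 hLLL1 hu
        convert this using 3 <;> omega
      have hm1 := mul_le_mul_of_nonneg_left hw1 hAm.le
      have hm1' := mul_le_mul_of_nonneg_left hw1 hAp.le
      have hm2 := mul_le_mul_of_nonneg_left hw2 hK.le
      constructor
      · have := hb.1; nlinarith
      · have := hb.2; nlinarith
    have wlo : ∀ u ∈ Icc (t - 1) (t + 1),
        -(Am * (ell n t + 2) + K * 2 ^ (n + 3) * rr (n + 1) t) ≤ deriv (deriv F) u :=
      fun u hu => (wbounds u hu).1
    have whi : ∀ u ∈ Icc (t - 1) (t + 1),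
        deriv (deriv F) u ≤ Ap * (ell n t + 2) + K * 2 ^ (n + 3) * rr (n + 1) t :=
      fun u hu => (wbounds u hu).2
    -- F window bound
    have hFone : ∀ u ∈ Icc (t - 1) (t + 1),
        F u ≤ Bp * (ell (n + 2) t + 2) + K * 2 ^ (n + 5) * rr (n + 3) t ∧
        -F u ≤ Bm * (ell (n + 2) t + 2) + K * 2 ^ (n + 5) * rr (n + 3) t := by
      intro u hu
      have hb := hT2 u (le_trans (le_max_right T1 T2) (hmemT u hu))
      have hw1 : ell (n + 2) u ≤ ell (n + 2) t + 2 := by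
        apply ell_window (n + 2) (by omega) ht3 _ _ hu
        · push_cast; linarith
        · push_cast; linarith
      have hw2 : rr (n + 3) u ≤ 2 ^ (n + 5) * rr (n + 3) t := by
        have := rr_window (n + 3) ht3 hL4 hLL2 hLLL1 hu
        convert this using 3 <;> omega
      have hm1 := mul_le_mul_of_nonneg_left hw1 hBp.le
      have hm1' := mul_le_mul_of_nonneg_left hw1 hBm.le
      have hm2 := mul_le_mul_of_nonneg_left hw2 hK.le
      constructor
      · have := hb.2; nlinarith
      · have := hb.1; nlinarith
    have hFdw : ∀ u ∈ Icc (t - 1) (t + 1), ∀ v ∈ Icc (t - 1) (t + 1),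
        F u - F v ≤ S * (ell (n + 2) t + 2) + 2 ^ (n + 6) * K * rr (n + 3) t := by
      intro u hu v hv
      have h1 := (hFone u hu).1
      have h2 := (hFone v hv).2
      have hps : (2:ℝ) ^ (n + 6) = 2 * 2 ^ (n + 5) := by rw [pow_succ]; ring
      rw [hSdef, hps]
      linarith
    -- remaining numeric facts
    have hr2x : Real.log (Real.log t) ≤ rr (n + 2) t := by
      unfold rr
      rw [le_div_iff₀ (by positivity)]
      have e1 : Real.log (Real.log t) * Real.log (Real.log t) ^ (n + 2)
          = Real.log (Real.log t) ^ (n + 3) := by rw [pow_succ]; ring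
      rw [e1]
      nlinarith
    have hr21 : (1:ℝ) ≤ rr (n + 2) t := by
      unfold rr
      rw [le_div_iff₀ (by positivity)]
      have e2 : Real.log (Real.log t) ^ (n + 2) ≤ Real.log (Real.log t) ^ (n + 3) :=
        pow_le_pow_right₀ (by linarith) (by omega)
      nlinarith
    -- the two one-sided bounds
    have hup := one_side n S C0 K' Am Ap K F (deriv F) (deriv (deriv F)) t
      hAm hAp hK hS hC0pos hC0sq1 hK'1 hders hders2 wlo whi hFdw
      hLL2 hLpos hAmLL hApLL hr2x hr21
    have hdn := one_side n S C0 K' Ap Am K (fun u => -F u) (fun u => -deriv F u)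
      (fun u => -deriv (deriv F) u) t
      hAp hAm hK hS hC0pos hC0sq2 hK'2
      (fun u hu => (hders u hu).neg) (fun u hu => (hders2 u hu).neg)
      (fun u hu => by have := whi u hu; linarith)
      (fun u hu => by have := wlo u hu; linarith)
      (fun u hu v hv => by have := hFdw v hv u hu; linarith)
      hLL2 hLpos hApLL hAmLL hr2x hr21
    rw [abs_le]
    constructor
    · linarith
    · exact hup
  rw [eventually_atTop] at hev
  obtain ⟨T', hT'⟩ := hev
  exact ⟨K', hK'pos, T', hT'⟩
end
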